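/- arXiv:2111.05566 — 8 statements merged into one kernel-verified Lean document; each statement's English description precedes it below -/
import Mathlib

section
/- Every subgroup H of G = PSL(2,7) whose order is divisible by 14 equals the whole group G. Consequently, for any x, y ∈ G with orderOf x = 7 and orderOf y = 2, the subgroup generated by {x, y} is all of G. -/
open Matrix

/-- `PSL(2,7)`: the quotient of `SL(2, ZMod 7)` by its center. -/
abbrev PSL27 : Type := Matrix.ProjectiveSpecialLinearGroup (Fin 2) (ZMod 7)

namespace PSL27Aux

abbrev SL27 := SpecialLinearGroup (Fin 2) (ZMod 7)

instance : DecidableEq SL27 := fun a b => decidable_of_iff (a.1 = b.1) Subtype.ext_iff.symm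

lemma zmod7_sq (r : ZMod 7) (h : r ^ 2 = 1) : r = 1 ∨ r = -1 := by revert h; revert r; decide

lemma scalar_one : scalar (Fin 2) (1 : ZMod 7) = ((1 : SL27) : Matrix (Fin 2) (Fin 2) (ZMod 7)) := by
  decide

lemma scalar_negone :
    scalar (Fin 2) (-1 : ZMod 7) = ((-1 : SL27) : Matrix (Fin 2) (Fin 2) (ZMod 7)) := by decide

lemma center_char (M : SL27) : M ∈ Subgroup.center SL27 ↔ M = 1 ∨ M = -1 := by
  rw [Matrix.SpecialLinearGroup.mem_center_iff]
  constructor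
  · rintro ⟨r, hr, hM⟩
    rcases zmod7_sq r (by simpa using hr) with rfl | rfl
    · left; apply Subtype.ext; rw [← hM]; exact scalar_one
    · right; apply Subtype.ext; rw [← hM]; exact scalar_negone
  · rintro (rfl | rfl)
    · exact ⟨1, by norm_num, scalar_one⟩
    · exact ⟨-1, by norm_num, scalar_negone⟩

instance : DecidablePred (· ∈ Subgroup.center SL27) :=
  fun a => decidable_of_iff _ (center_char a).symm

instance : DecidableEq PSL27 := fun a b => Quotient.recOnSubsingleton₂ a b fun a b =>
  decidable_of_iff (a⁻¹ * b ∈ Subgroup.center SL27) (Iff.symm (QuotientGroup.eq))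

instance : Fintype PSL27 := QuotientGroup.fintype _

instance f7 : Fact (Nat.Prime 7) := ⟨by norm_num⟩

set_option maxRecDepth 100000 in
lemma card_SL : Nat.card SL27 = 336 := by rw [Nat.card_eq_fintype_card]; decide

set_option maxRecDepth 100000 in
lemma card_center : Nat.card (Subgroup.center SL27) = 2 := by
  rw [Nat.card_eq_fintype_card]; decide

lemma card_PSL : Nat.card PSL27 = 168 := by
  have h := Subgroup.card_eq_card_quotient_mul_card_subgroup (Subgroup.center SL27)
  rw [card_SL, card_center] at h
  have hq : Nat.card PSL27 = Nat.card (SL27 ⧸ Subgroup.center SL27) := rfl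
  omega

/-- concrete elements -/
def A : SL27 := ⟨!![1,1;0,1], by decide⟩
def B : SL27 := ⟨!![1,0;1,1], by decide⟩
def U : SL27 := ⟨!![0,-1;1,0], by decide⟩
def V : SL27 := ⟨!![1,3;4,-1], by decide⟩

def a : PSL27 := QuotientGroup.mk A
def b : PSL27 := QuotientGroup.mk B
def u : PSL27 := QuotientGroup.mk U
def v : PSL27 := QuotientGroup.mk V

set_option maxRecDepth 10000 in
lemma order_a : orderOf a = 7 :=
  orderOf_eq_prime (by decide) (by decide)

set_option maxRecDepth 10000 in
lemma order_b : orderOf b = 7 :=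
  orderOf_eq_prime (by decide) (by decide)

set_option maxRecDepth 10000 in
lemma order_u : orderOf u = 2 :=
  orderOf_eq_prime (by decide) (by decide)

set_option maxRecDepth 10000 in
lemma order_v : orderOf v = 2 :=
  orderOf_eq_prime (by decide) (by decide)

set_option maxRecDepth 10000 in
lemma order_uv : orderOf (u * v) = 3 :=
  orderOf_eq_prime (by decide) (by decide)

set_option maxRecDepth 10000 in
lemma b_ne_pow_a : ∀ k : Fin 7, b ≠ a ^ (k : ℕ) := by decide

lemma b_not_mem_zpowers_a : b ∉ Subgroup.zpowers a := by
  intro hb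
  obtain ⟨k, hk⟩ := hb
  have hn7 : a ^ (7 : ℕ) = 1 := by
    have := pow_orderOf_eq_one a; rwa [order_a] at this
  have h7 : a ^ (7 : ℤ) = 1 := by exact_mod_cast hn7
  have hmod : a ^ (k % 7) = b := by
    have := Int.mul_ediv_add_emod k 7
    have hsplit : a ^ (7 * (k / 7) + k % 7) = (a ^ (7 : ℤ)) ^ (k / 7) * a ^ (k % 7) := by
      rw [_root_.zpow_add, _root_.zpow_mul]
    rw [h7, _root_.one_zpow, one_mul] at hsplit
    rw [← hsplit, this]
    exact hk
  have h0 : 0 ≤ k % 7 := Int.emod_nonneg k (by norm_num)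
  have h7' : k % 7 < 7 := Int.emod_lt_of_pos k (by norm_num)
  have : a ^ ((k % 7).toNat) = b := by
    rw [← zpow_natCast, Int.toNat_of_nonneg h0, hmod]
  exact b_ne_pow_a ⟨(k % 7).toNat, by omega⟩ this.symm

lemma zpowers_a_ne_zpowers_b : Subgroup.zpowers a ≠ Subgroup.zpowers b := by
  intro h
  exact b_not_mem_zpowers_a (h ▸ Subgroup.mem_zpowers b)

lemma factz {n : ℕ} (h7 : 7 ∣ n) (h49 : ¬ 49 ∣ n) (hn : n ≠ 0) : n.factorization 7 = 1 := by
  have hp : Nat.Prime 7 := by norm_num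
  have h1 : 1 ≤ n.factorization 7 :=
    (Nat.Prime.pow_dvd_iff_le_factorization hp hn).1 (by simpa using h7)
  have h2 : ¬ 2 ≤ n.factorization 7 := fun h =>
    h49 (by simpa using (Nat.Prime.pow_dvd_iff_le_factorization hp hn).2 h)
  omega

/-- In a finite group of order `7 * m` with `m ∣ 12`, any two subgroups of order 7 coincide. -/
lemma uniq7 {K : Type} [Group K] [Finite K] {m : ℕ} (hm : m ∣ 12)
    (hK : Nat.card K = 7 * m) (P Q : Subgroup K)
    (hP : Nat.card P = 7) (hQ : Nat.card Q = 7) : P = Q := by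
  have hKdvd : Nat.card K ∣ 84 := hK ▸ (mul_dvd_mul_left 7 hm)
  have hfact : (Nat.card K).factorization 7 = 1 := by
    refine factz ⟨m, hK⟩ (fun h => ?_) Nat.card_pos.ne'
    have : (49 : ℕ) ∣ 84 := h.trans hKdvd
    norm_num at this
  obtain ⟨S, hPS⟩ := (IsPGroup.of_card (hP.trans (pow_one 7).symm)).exists_le_sylow
  obtain ⟨T, hQT⟩ := (IsPGroup.of_card (hQ.trans (pow_one 7).symm)).exists_le_sylow
  have hScard : Nat.card S = 7 := by rw [S.card_eq_multiplicity, hfact, pow_one]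
  have hTcard : Nat.card T = 7 := by rw [T.card_eq_multiplicity, hfact, pow_one]
  have hPeq : P = S := Subgroup.eq_of_le_of_card_ge hPS (by rw [hScard, hP])
  have hQeq : Q = T := Subgroup.eq_of_le_of_card_ge hQT (by rw [hTcard, hQ])
  have hST : S = T := by
    have h1 : Nat.card (Sylow 7 K) ≡ 1 [MOD 7] := card_sylow_modEq_one 7 K
    have hidx : (S : Subgroup K).index = m := by
      have := Subgroup.card_mul_index (S : Subgroup K)
      rw [hScard, hK] at this
      omega
    have h2 : Nat.card (Sylow 7 K) ∣ 12 := by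
      have := S.card_eq_index_normalizer
      rw [this]
      exact (Subgroup.index_dvd_of_le (S : Subgroup K).le_normalizer).trans (hidx ▸ hm)
    have hle : Nat.card (Sylow 7 K) ≤ 12 := Nat.le_of_dvd (by norm_num) h2
    have h1' : Nat.card (Sylow 7 K) % 7 = 1 % 7 := h1
    have hone : Nat.card (Sylow 7 K) = 1 := by
      set n := Nat.card (Sylow 7 K)
      interval_cases n <;> omega
    have hsub : Subsingleton (Sylow 7 K) := (Nat.card_eq_one_iff_unique.mp hone).1
    exact hsub.elim S T
  rw [hPeq, hQeq, hST]

/-- Version for subgroups of an ambient group contained in a subgroup `H`. -/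
lemma uniq7' {K : Type} [Group K] [Finite K] (H : Subgroup K) {m : ℕ} (hm : m ∣ 12)
    (hH : Nat.card H = 7 * m) (P Q : Subgroup K) (hPH : P ≤ H) (hQH : Q ≤ H)
    (hP : Nat.card P = 7) (hQ : Nat.card Q = 7) : P = Q := by
  have hP' : Nat.card (P.subgroupOf H) = 7 := by
    rw [Nat.card_congr (Subgroup.subgroupOfEquivOfLe hPH).toEquiv, hP]
  have hQ' : Nat.card (Q.subgroupOf H) = 7 := by
    rw [Nat.card_congr (Subgroup.subgroupOfEquivOfLe hQH).toEquiv, hQ]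
  have h := uniq7 hm hH _ _ hP' hQ'
  ext x
  constructor
  · intro hx
    have hxH : x ∈ H := hPH hx
    have : (⟨x, hxH⟩ : H) ∈ P.subgroupOf H := Subgroup.mem_subgroupOf.2 hx
    rw [h] at this
    exact Subgroup.mem_subgroupOf.1 this
  · intro hx
    have hxH : x ∈ H := hQH hx
    have : (⟨x, hxH⟩ : H) ∈ Q.subgroupOf H := Subgroup.mem_subgroupOf.2 hx
    rw [← h] at this
    exact Subgroup.mem_subgroupOf.1 this

/-- Conjugate of a subgroup as image under `MulAut.conj`. -/
lemma card_conj_map {K : Type} [Group K] (P : Subgroup K) (g : K) :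
    Nat.card (P.map ((MulAut.conj g).toMonoidHom)) = Nat.card P :=
  (Nat.card_congr (Subgroup.equivMapOfInjective P _ (MulAut.conj g).injective).toEquiv).symm

lemma G_card_fact : (Nat.card PSL27).factorization 7 = 1 := by
  rw [card_PSL]; exact factz (by norm_num) (by norm_num) (by norm_num)

/-- A Sylow 7-subgroup attached to `a`. -/
noncomputable def Sa : Sylow 7 PSL27 :=
  Sylow.ofCard (Subgroup.zpowers a)
    (by rw [Nat.card_zpowers, order_a, G_card_fact, pow_one])

noncomputable def Sb : Sylow 7 PSL27 :=
  Sylow.ofCard (Subgroup.zpowers b)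
    (by rw [Nat.card_zpowers, order_b, G_card_fact, pow_one])

lemma card_sylow7 : Nat.card (Sylow 7 PSL27) = 8 := by
  have h1 : Nat.card (Sylow 7 PSL27) ≡ 1 [MOD 7] := card_sylow_modEq_one 7 PSL27
  have h1' : Nat.card (Sylow 7 PSL27) % 7 = 1 % 7 := h1
  have h2 : Nat.card (Sylow 7 PSL27) ∣ 168 := by
    rw [Sa.card_eq_index_normalizer]
    exact card_PSL ▸ Subgroup.index_dvd_card _
  have hne : Nat.card (Sylow 7 PSL27) ≠ 1 := by
    intro h
    have hsub : Subsingleton (Sylow 7 PSL27) := (Nat.card_eq_one_iff_unique.mp h).1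
    have : Sa = Sb := hsub.elim Sa Sb
    have : (Sa : Subgroup PSL27) = Sb := congrArg _ this
    exact zpowers_a_ne_zpowers_b this
  have hle : Nat.card (Sylow 7 PSL27) ≤ 168 := Nat.le_of_dvd (by norm_num) h2
  set n := Nat.card (Sylow 7 PSL27)
  interval_cases n <;> omega

/-- Any subgroup of order 7 has normalizer of order 21. -/
lemma card_normalizer (P : Subgroup PSL27) (hP : Nat.card P = 7) :
    Nat.card (Subgroup.normalizer (P : Set PSL27)) = 21 := by
  let S : Sylow 7 PSL27 := Sylow.ofCard P (by rw [hP, G_card_fact, pow_one])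
  have hidx : (Subgroup.normalizer (S : Set PSL27)).index = 8 := by
    rw [← S.card_eq_index_normalizer, card_sylow7]
  have hSP : (S : Subgroup PSL27) = P := rfl
  have := Subgroup.card_mul_index (Subgroup.normalizer (P : Set PSL27))
  rw [card_PSL, show (Subgroup.normalizer (P : Set PSL27)).index = 8 from hidx] at this
  omega

/-- If all order-7 subgroups inside `H` are equal, `H` normalizes such a subgroup. -/
lemma le_normalizer_of_uniq {H P : Subgroup PSL27} (hPH : P ≤ H) (hP7 : Nat.card P = 7)
    {m : ℕ} (hm : m ∣ 12) (hH : Nat.card H = 7 * m) : H ≤ Subgroup.normalizer (P : Set PSL27) := by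
  intro h hh
  have hconj : P.map ((MulAut.conj h).toMonoidHom) = P := by
    refine uniq7' H hm hH _ _ ?_ hPH ((card_conj_map P h).trans hP7) hP7
    rintro x ⟨y, hy, rfl⟩
    simpa using H.mul_mem (H.mul_mem hh (hPH hy)) (H.inv_mem hh)
  rw [Subgroup.mem_normalizer_iff]
  intro g
  constructor
  · intro hg
    have : (MulAut.conj h).toMonoidHom g ∈ P.map ((MulAut.conj h).toMonoidHom) :=
      Subgroup.mem_map_of_mem _ hg
    rw [hconj] at this
    simpa using this
  · intro hg
    rw [← hconj] at hg
    obtain ⟨y, hy, hyx⟩ := hg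
    have : y = g := by
      have : h * y * h⁻¹ = h * g * h⁻¹ := by simpa using hyx
      group at this
      exact mul_left_cancel (mul_right_cancel this)
    rwa [← this]

end PSL27Aux

open PSL27Aux in
/-- Every subgroup of `PSL(2,7)` of order divisible by `14` is the whole group;
hence any `x, y` of orders `7` and `2` generate `PSL(2,7)`. -/
theorem psl27_subgroup_card_div_14_eq_top :
    (∀ H : Subgroup PSL27, 14 ∣ Nat.card H → H = ⊤) ∧
    (∀ x y : PSL27, orderOf x = 7 → orderOf y = 2 →
      Subgroup.closure ({x, y} : Set PSL27) = ⊤) := by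
  have main : ∀ H : Subgroup PSL27, 14 ∣ Nat.card H → H = ⊤ := by
    intro H h14
    have hdvd : Nat.card H ∣ 168 := by
      have := Subgroup.card_subgroup_dvd_card H; rwa [card_PSL] at this
    have hpos : 0 < Nat.card H := Nat.card_pos
    have hcases : Nat.card H = 14 ∨ Nat.card H = 28 ∨ Nat.card H = 42 ∨
        Nat.card H = 56 ∨ Nat.card H = 84 ∨ Nat.card H = 168 := by
      have hle : Nat.card H ≤ 168 := Nat.le_of_dvd (by norm_num) hdvd
      set n := Nat.card H
      interval_cases n <;> omega
    -- helper for the orders 14, 28, 42 (`7 * m` with H ≤ normalizer of Sylow 7)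
    have small : ∀ m : ℕ, m ∣ 12 → Nat.card H = 7 * m → Nat.card H ∣ 21 := by
      intro m hm hcard
      letI : Fintype H := Fintype.ofFinite H
      obtain ⟨x, hx⟩ := exists_prime_orderOf_dvd_card (G := H) 7
        (by rw [← Nat.card_eq_fintype_card, hcard]; exact ⟨m, rfl⟩)
      have hx' : orderOf (x : PSL27) = 7 :=
        (orderOf_injective H.subtype (Subgroup.subtype_injective H) x).trans hx
      set P := Subgroup.zpowers (x : PSL27) with hPdef
      have hP7 : Nat.card P = 7 := by rw [hPdef, Nat.card_zpowers, hx']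
      have hPH : P ≤ H := Subgroup.zpowers_le.2 x.2
      have hle := le_normalizer_of_uniq hPH hP7 hm hcard
      have := Subgroup.card_dvd_of_le hle
      rwa [card_normalizer P hP7] at this
    rcases hcases with hc | hc | hc | hc | hc | hc
    · have := small 2 (by norm_num) (by omega); rw [hc] at this; norm_num at this
    · have := small 4 (by norm_num) (by omega); rw [hc] at this; norm_num at this
    · have := small 6 (by norm_num) (by omega); rw [hc] at this; norm_num at this
    · -- order 56
      exfalso
      have hidx : H.index = 3 := by
        have := Subgroup.card_mul_index H
        rw [hc, card_PSL] at this; omega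
      have hQcard : Nat.card (PSL27 ⧸ H) = 3 := by
        rw [← Subgroup.index_eq_card, hidx]
      set K := H.normalCore with hKdef
      have hKle : K ≤ H := Subgroup.normalCore_le H
      have hKnormal : K.Normal := Subgroup.normalCore_normal H
      have hKidx : K.index ∣ 6 := by
        rw [hKdef, Subgroup.normalCore_eq_ker, Subgroup.index_ker]
        have h1 : Nat.card (MulAction.toPermHom PSL27 (PSL27 ⧸ H)).range ∣
            Nat.card (Equiv.Perm (PSL27 ⧸ H)) := Subgroup.card_subgroup_dvd_card _
        have h2 : Nat.card (Equiv.Perm (PSL27 ⧸ H)) = 6 := by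
          letI : Fintype (PSL27 ⧸ H) := Fintype.ofFinite _
          letI : DecidableEq (PSL27 ⧸ H) := Classical.decEq _
          rw [Nat.card_eq_fintype_card, Fintype.card_perm, ← Nat.card_eq_fintype_card, hQcard]
          decide
        rwa [h2] at h1
      have hKdvd : Nat.card K ∣ 56 := by
        have := Subgroup.card_dvd_of_le hKle; rwa [hc] at this
      have hKmul : Nat.card K * K.index = 168 := by
        have := Subgroup.card_mul_index K; rwa [card_PSL] at this
      have hKc : Nat.card K = 56 ∨ Nat.card K = 28 := by
        have h168 : (168 : ℕ) ∣ Nat.card K * 6 := by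
          have := Nat.mul_dvd_mul_left (Nat.card K) hKidx; rwa [hKmul] at this
        have hKle : Nat.card K ≤ 56 := Nat.le_of_dvd (by norm_num) hKdvd
        have hKpos : 0 < Nat.card K := Nat.card_pos
        set n := Nat.card K
        interval_cases n <;> omega
      rcases hKc with hK56 | hK28
      · -- K = H, so H is normal
        have hKH : K = H := Subgroup.eq_of_le_of_card_ge hKle (by omega)
        have hHnormal : H.Normal := by rw [← hKH]; exact hKnormal
        have hmem : ∀ w : PSL27, orderOf w = 2 → w ∈ H := by
          intro w hw
          have h1 : orderOf ((QuotientGroup.mk' H) w) ∣ 2 := by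
            have := orderOf_map_dvd (QuotientGroup.mk' H) w; rwa [hw] at this
          have h2 : orderOf ((QuotientGroup.mk' H) w) ∣ 3 := by
            have := orderOf_dvd_natCard ((QuotientGroup.mk' H) w); rwa [hQcard] at this
          have h3 : orderOf ((QuotientGroup.mk' H) w) = 1 := by
            have h4 := Nat.dvd_gcd h1 h2
            rw [show Nat.gcd 2 3 = 1 from rfl] at h4
            exact Nat.dvd_one.1 h4
          have h5 : (QuotientGroup.mk' H) w = 1 := orderOf_eq_one_iff.1 h3
          have h6 : w ∈ (QuotientGroup.mk' H).ker := MonoidHom.mem_ker.2 h5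
          rwa [QuotientGroup.ker_mk'] at h6
        have huv : u * v ∈ H := H.mul_mem (hmem u order_u) (hmem v order_v)
        have := Subgroup.orderOf_dvd_natCard H huv
        rw [order_uv, hc] at this
        norm_num at this
      · -- K normal of order 28; its unique order-7 subgroup is normal in G
        letI : Fintype K := Fintype.ofFinite K
        obtain ⟨x, hx⟩ := exists_prime_orderOf_dvd_card (G := K) 7
          (by rw [← Nat.card_eq_fintype_card, hK28]; norm_num)
        have hx' : orderOf (x : PSL27) = 7 :=
          (orderOf_injective K.subtype (Subgroup.subtype_injective K) x).trans hx
        set Q := Subgroup.zpowers (x : PSL27) with hQdef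
        have hQ7 : Nat.card Q = 7 := by rw [hQdef, Nat.card_zpowers, hx']
        have hQK : Q ≤ K := Subgroup.zpowers_le.2 x.2
        have hQnormal : Q.Normal := by
          constructor
          intro q hq g
          have hconj : Q.map ((MulAut.conj g).toMonoidHom) = Q := by
            refine uniq7' K (m := 4) (by norm_num) (by rw [hK28]) _ _ ?_ hQK
              ((card_conj_map Q g).trans hQ7) hQ7
            rintro y ⟨z, hz, rfl⟩
            simpa using hKnormal.conj_mem z (hQK hz) g
          rw [← hconj]
          exact Subgroup.mem_map_of_mem _ hq
        -- now all Sylow 7-subgroups equal Q, contradicting zpowers a ≠ zpowers b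
        let SQ : Sylow 7 PSL27 := Sylow.ofCard Q (by rw [hQ7, G_card_fact, pow_one])
        haveI : SQ.Normal := hQnormal
        obtain ⟨g1, hg1⟩ := MulAction.exists_smul_eq PSL27 SQ Sa
        obtain ⟨g2, hg2⟩ := MulAction.exists_smul_eq PSL27 SQ Sb
        rw [Sylow.smul_eq_of_normal] at hg1 hg2
        apply zpowers_a_ne_zpowers_b
        calc Subgroup.zpowers a = (Sa : Subgroup PSL27) := rfl
          _ = (SQ : Subgroup PSL27) := by rw [← hg1]
          _ = (Sb : Subgroup PSL27) := by rw [hg2]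
          _ = Subgroup.zpowers b := rfl
    · -- order 84 : index 2
      exfalso
      have hidx : H.index = 2 := by
        have := Subgroup.card_mul_index H
        rw [hc, card_PSL] at this; omega
      have hmem : ∀ w : PSL27, orderOf w = 7 → w ∈ H := by
        intro w hw
        have h8 : w ^ 4 * w ^ 4 = w := by
          rw [← pow_add]
          have : w ^ 7 = 1 := by
            have := pow_orderOf_eq_one w; rwa [hw] at this
          calc w ^ 8 = w ^ 7 * w := by rw [← pow_succ]
            _ = w := by rw [this, one_mul]
        have := Subgroup.mul_self_mem_of_index_two hidx (w ^ 4)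
        rwa [h8] at this
      have hPa : Subgroup.zpowers a ≤ H := Subgroup.zpowers_le.2 (hmem a order_a)
      have hPb : Subgroup.zpowers b ≤ H := Subgroup.zpowers_le.2 (hmem b order_b)
      exact zpowers_a_ne_zpowers_b (uniq7' H (m := 12) (by norm_num) (by rw [hc]) _ _ hPa hPb
        (by rw [Nat.card_zpowers, order_a]) (by rw [Nat.card_zpowers, order_b]))
    · exact Subgroup.eq_top_of_card_eq H (by rw [hc, card_PSL])
  refine ⟨main, ?_⟩
  intro x y hx hy
  apply main
  have hxmem : x ∈ Subgroup.closure ({x, y} : Set PSL27) :=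
    Subgroup.subset_closure (Set.mem_insert x {y})
  have hymem : y ∈ Subgroup.closure ({x, y} : Set PSL27) :=
    Subgroup.subset_closure (Set.mem_insert_of_mem x rfl)
  have h7 : 7 ∣ Nat.card (Subgroup.closure ({x, y} : Set PSL27)) := by
    have := Subgroup.orderOf_dvd_natCard _ hxmem; rwa [hx] at this
  have h2 : 2 ∣ Nat.card (Subgroup.closure ({x, y} : Set PSL27)) := by
    have := Subgroup.orderOf_dvd_natCard _ hymem; rwa [hy] at this
  have h14 : (2 * 7 : ℕ) ∣ Nat.card (Subgroup.closure ({x, y} : Set PSL27)) :=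
    Nat.Coprime.mul_dvd_of_dvd_of_dvd (by norm_num) h2 h7
  exact h14
end

section
/- If x, y are elements of G = PSL(2,7) with orderOf x = 7, orderOf y = 2 and orderOf (x*y) = 7, then x is conjugate in G to (x*y)⁻¹. (In the Frobenius triple count, the contribution from pairs of distinct conjugacy classes of order-7 elements is zero.) -/
open Matrix

namespace PSLAux
abbrev M2 := Matrix (Fin 2) (Fin 2) (ZMod 7)
abbrev SL2 := Matrix.SpecialLinearGroup (Fin 2) (ZMod 7)
def nmul (p q : Nat) : Nat :=
  ((p/343 * (q/343) + p/49%7 * (q/7%7)) % 7) * 343 +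
  ((p/343 * (q/49%7) + p/49%7 * (q%7)) % 7) * 49 +
  ((p/7%7 * (q/343) + p%7 * (q/7%7)) % 7) * 7 +
  ((p/7%7 * (q/49%7) + p%7 * (q%7)) % 7)
def ndet (p : Nat) : Nat := (p/343 * (p%7) + 98 - p/49%7 * (p/7%7)) % 7
def nneg (p : Nat) : Nat := (7 - p/343)%7*343 + (7 - p/49%7)%7*49 + (7 - p/7%7)%7*7 + (7 - p%7)%7
def ninv (p : Nat) : Nat := (p%7)*343 + (7 - p/49%7)%7*49 + (7 - p/7%7)%7*7 + p/343%7
def npow7 (p : Nat) : Nat := nmul (nmul (nmul (nmul (nmul (nmul p p) p) p) p) p) p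
def ntr (p : Nat) : Nat := (p/343 + p%7) % 7
def dec (p : Nat) : M2 := !![((p/343 : ℕ) : ZMod 7), ((p/49%7 : ℕ) : ZMod 7);
                             ((p/7%7 : ℕ) : ZMod 7), ((p%7 : ℕ) : ZMod 7)]
def code (M : M2) : Nat := (M 0 0).val*343 + (M 0 1).val*49 + (M 1 0).val*7 + (M 1 1).val
lemma dec_enc (a b c d : ℕ) (ha : a < 7) (hb : b < 7) (hc : c < 7) (hd : d < 7) :
    dec (a*343+b*49+c*7+d) = !![(a : ZMod 7), (b : ZMod 7); (c : ZMod 7), (d : ZMod 7)] := by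
  have h1 : (a*343+b*49+c*7+d)/343 = a := by omega
  have h2 : (a*343+b*49+c*7+d)/49%7 = b := by omega
  have h3 : (a*343+b*49+c*7+d)/7%7 = c := by omega
  have h4 : (a*343+b*49+c*7+d)%7 = d := by omega
  rw [dec, h1, h2, h3, h4]
lemma negc {a : ℕ} (ha : a < 7) : (((7-a)%7 : ℕ) : ZMod 7) = -(a : ZMod 7) := by
  interval_cases a <;> decide
lemma dec_nmul (p q : Nat) : dec (nmul p q) = dec p * dec q := by
  rw [nmul, dec_enc _ _ _ _ (Nat.mod_lt _ (by norm_num)) (Nat.mod_lt _ (by norm_num))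
      (Nat.mod_lt _ (by norm_num)) (Nat.mod_lt _ (by norm_num)), dec, dec, Matrix.mul_fin_two]
  congr 1 <;> push_cast [ZMod.natCast_mod] <;> ring

-- new material
lemma val_lt (x : ZMod 7) : x.val < 7 := ZMod.val_lt x

lemma dec_code (M : M2) : dec (code M) = M := by
  rw [code, dec_enc _ _ _ _ (val_lt _) (val_lt _) (val_lt _) (val_lt _)]
  simp only [ZMod.natCast_val, ZMod.cast_id]
  exact (Matrix.eta_fin_two M).symm

lemma code_lt (M : M2) : code M < 2401 := by
  have := val_lt (M 0 0); have := val_lt (M 0 1); have := val_lt (M 1 0); have := val_lt (M 1 1)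
  rw [code]; omega

lemma code_inj {M N : M2} (h : code M = code N) : M = N := by
  rw [← dec_code M, ← dec_code N, h]

lemma code_dec {p : Nat} (h : p < 2401) : code (dec p) = p := by
  rw [dec, code]
  simp only [Matrix.cons_val', Matrix.cons_val_zero, Matrix.cons_val_one, Matrix.head_cons,
    Matrix.empty_val', Matrix.cons_val_fin_one, Matrix.head_fin_const, Matrix.of_apply]
  rw [ZMod.val_cast_of_lt (by omega), ZMod.val_cast_of_lt (by omega),
    ZMod.val_cast_of_lt (by omega), ZMod.val_cast_of_lt (by omega)]
  omega

lemma nmul_lt (p q : Nat) : nmul p q < 2401 := by rw [nmul]; omega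
lemma nneg_lt (p : Nat) : nneg p < 2401 := by rw [nneg]; omega
lemma ninv_lt (p : Nat) : ninv p < 2401 := by rw [ninv]; omega

lemma code_mul (M N : M2) : code (M*N) = nmul (code M) (code N) := by
  have h : dec (nmul (code M) (code N)) = M * N := by
    rw [dec_nmul, dec_code, dec_code]
  rw [← h, code_dec (nmul_lt _ _)]

lemma dec_nneg {p : Nat} (h : p < 2401) : dec (nneg p) = - dec p := by
  rw [nneg, dec_enc _ _ _ _ (Nat.mod_lt _ (by norm_num)) (Nat.mod_lt _ (by norm_num))
      (Nat.mod_lt _ (by norm_num)) (Nat.mod_lt _ (by norm_num)), dec]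
  rw [negc (by omega), negc (by omega), negc (by omega), negc (by omega)]
  ext i j; fin_cases i <;> fin_cases j <;> simp

lemma code_neg (M : M2) : code (-M) = nneg (code M) := by
  have h : dec (nneg (code M)) = -M := by rw [dec_nneg (code_lt M), dec_code]
  rw [← h, code_dec (nneg_lt _)]

lemma dec_ninv {p : Nat} (h : p < 2401) : dec (ninv p) = (dec p).adjugate := by
  rw [ninv, dec_enc _ _ _ _ (by omega) (Nat.mod_lt _ (by norm_num))
      (Nat.mod_lt _ (by norm_num)) (by omega), dec, Matrix.adjugate_fin_two]
  rw [negc (by omega), negc (by omega)]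
  have h2 : p/343%7 = p/343 := by omega
  rw [h2]; ext i j; fin_cases i <;> fin_cases j <;> simp

lemma cast_ndet {p : Nat} (h : p < 2401) : ((ndet p : ℕ) : ZMod 7) = (dec p).det := by
  have hb : p/49%7 * (p/7%7) ≤ 98 :=
    le_trans (Nat.mul_le_mul (by omega) (by omega) : _ ≤ 6*6) (by norm_num)
  rw [ndet, dec, Matrix.det_fin_two_of, ZMod.natCast_mod, Nat.cast_sub (by omega)]
  push_cast
  have h98 : (98 : ZMod 7) = 0 := by decide
  rw [h98]
  ring

-- appended to part2 content (inside namespace)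
lemma ndet_lt (p : Nat) : ndet p < 7 := Nat.mod_lt _ (by norm_num)

lemma cast_eq_one {n : Nat} (hlt : n < 7) (h : ((n : ℕ) : ZMod 7) = 1) : n = 1 := by
  have := ZMod.val_cast_of_lt (show n < 7 by omega)
  rw [h] at this
  exact this.symm.trans (by decide)

lemma ndet_code {M : M2} (hd : M.det = 1) : ndet (code M) = 1 := by
  have h := cast_ndet (code_lt M)
  rw [dec_code, hd] at h
  exact cast_eq_one (ndet_lt _) h

lemma det_dec {p : Nat} (h : p < 2401) (hd : ndet p = 1) : (dec p).det = 1 := by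
  rw [← cast_ndet h, hd]; norm_num

lemma npow7_code (M : M2) : npow7 (code M) = code (M^7) := by
  have h7 : M^7 = M*M*M*M*M*M*M := by
    rw [pow_succ, pow_succ, pow_succ, pow_succ, pow_succ, pow_succ, pow_one]
  rw [h7, npow7]
  simp only [← code_mul]

lemma code_one : code (1 : M2) = 344 := by decide
lemma code_negone : code (-1 : M2) = 2064 := by decide

lemma mem_center_iff' (A : SL2) :
    A ∈ Subgroup.center SL2 ↔ (A : M2) = 1 ∨ (A : M2) = -1 := by
  rw [Matrix.SpecialLinearGroup.mem_center_iff]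
  constructor
  · rintro ⟨r, hr, hA⟩
    rw [Fintype.card_fin] at hr
    have key : ∀ s : ZMod 7, s^2 = 1 → s = 1 ∨ s = -1 := by decide
    have hr2 := key r hr
    rcases hr2 with rfl | rfl
    · left; rw [← hA, _root_.map_one]
    · right; rw [← hA, map_neg, _root_.map_one]
  · rintro (h | h)
    · exact ⟨1, one_pow _, by rw [_root_.map_one, h]⟩
    · exact ⟨-1, by rw [Fintype.card_fin]; decide, by rw [map_neg, _root_.map_one, h]⟩

def allR (f : Nat → Bool) : Nat → Nat → Nat → Bool
  | 0, _, _ => false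
  | _+1, _, 0 => true
  | _+1, lo, 1 => f lo
  | fuel+1, lo, n+2 => allR f fuel lo ((n+2)/2) && allR f fuel (lo + (n+2)/2) (n+2 - (n+2)/2)

theorem allR_spec (f : Nat → Bool) : ∀ fuel lo n, allR f fuel lo n = true →
    ∀ i, lo ≤ i → i < lo + n → f i = true := by
  intro fuel
  induction fuel with
  | zero => intro lo n h; simp [allR] at h
  | succ fuel ih =>
    intro lo n h i h1 h2
    match n, h, h2 with
    | 0, h, h2 => exact absurd h2 (by omega)
    | 1, h, h2 =>
      have hi : i = lo := by omega
      subst hi; exact h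
    | (n+2), h, h2 =>
      rw [allR, Bool.and_eq_true] at h
      by_cases hc : i < lo + (n+2)/2
      · exact ih lo _ h.1 i h1 hc
      · exact ih _ _ h.2 i (by omega) (by omega)

def P7cert : List (Nat × Bool × Nat) := [(93, true, 351), (96, false, 1062), (121, true, 1069), (124, false, 732), (163, false, 379), (166, true, 718), (233, true, 718), (236, false, 379), (275, false, 732), (278, true, 1069), (303, false, 1062), (306, true, 351), (351, false, 119), (358, false, 161), (365, true, 161), (372, false, 91), (379, true, 119), (386, true, 91), (393, true, 344), (417, false, 1041), (442, true, 1034), (480, false, 725), (491, false, 344), (501, true, 697), (540, true, 690), (585, false, 365), (589, false, 690), (606, true, 1055), (638, false, 1034), (669, true, 358), (773, false, 1069), (777, true, 386), (805, true, 1048), (829, false, 718), (847, false, 358), (864, true, 725), (906, false, 351), (917, true, 711), (941, true, 1041), (959, false, 697), (987, false, 1055), (997, true, 365), (1105, true, 379), (1115, false, 1048), (1168, true, 1062), (1171, false, 711), (1189, false, 372), (1206, true, 704), (1248, false, 386), (1273, true, 732), (1283, true, 1076), (1294, false, 704), (1339, true, 372), (1357, false, 1076), (1443, false, 1076), (1461,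 true, 372), (1506, false, 704), (1517, true, 1076), (1527, true, 732), (1552, false, 386), (1594, true, 704), (1611, false, 372), (1629, false, 711), (1632, true, 1062), (1685, false, 1048), (1695, true, 379), (1803, true, 365), (1806, false, 1055), (1834, false, 697), (1859, true, 1041), (1876, true, 711), (1894, false, 351), (1936, true, 725), (1946, false, 358), (1971, false, 718), (1988, true, 1048), (2016, true, 386), (2027, false, 1069), (2071, true, 91), (2078, true, 119), (2085, false, 91), (2092, true, 161), (2099, false, 161), (2106, false, 119), (2113, false, 1034), (2131, true, 358), (2162, false, 690), (2194, true, 1055), (2211, true, 690), (2215, false, 365), (2260, false, 344), (2299, true, 697), (2309, true, 1034), (2320, false, 725), (2358, true, 344), (2383, false, 1041)]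

def LA : List Nat := [93,121,166,233,278,306,365,379,386,393,442,501,540,606,669,777,805,864,917,941,997,1105,1168,1206,1273,1283,1339,1461,1517,1527,1594,1632,1695,1803,1859,1876,1936,1988,2016,2071,2078,2092,2131,2194,2211,2299,2309,2358]

def Q4list : List Nat := [91,119,161,231,273,301,433,489,524,566,601,657,754,796,859,915,978,1020,1110,1145,1222,1236,1313,1348,1452,1487,1564,1578,1655,1690,1780,1822,1885,1941,2004,2046,2143,2199,2234,2276,2311,2367]

def check7 (p : Nat) : Bool :=
  !(ndet p == 1 && (npow7 p == 344 || npow7 p == 2064) && p != 344 && p != 2064) ||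
  (P7cert.any (fun t => t.1 == p) && (ntr p == 2 || ntr p == 5))

def check2 (q : Nat) : Bool :=
  !(ndet q == 1 && (nmul q q == 344 || nmul q q == 2064) && q != 344 && q != 2064) ||
  Q4list.contains q

set_option maxRecDepth 10000 in
theorem L1 : ∀ t ∈ P7cert, t.1 < 2401 ∧ t.2.2 < 2401 ∧ ndet t.2.2 = 1 ∧
    (nmul (nmul t.2.2 (bif t.2.1 then 393 else 491)) (ninv t.2.2) = t.1 ∨
     nmul (nmul t.2.2 (bif t.2.1 then 393 else 491)) (ninv t.2.2) = nneg t.1) ∧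
    LA.contains t.1 = t.2.1 := by decide

set_option maxRecDepth 10000 in
theorem L2 : allR check7 20 0 2401 = true := by decide

set_option maxRecDepth 10000 in
theorem L2' : allR check2 20 0 2401 = true := by decide

set_option maxRecDepth 10000 in
theorem L3 : ∀ t ∈ P7cert, ∀ q ∈ Q4list,
    ((ntr (nmul t.1 q) = 2 ∨ ntr (nmul t.1 q) = 5) ∧ nmul t.1 q ≠ 344 ∧ nmul t.1 q ≠ 2064) →
    LA.contains t.1 = LA.contains (ninv (nmul t.1 q)) := by decide

def tbcode (bl : Bool) : Nat := bif bl then 393 else 491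

def TB (bl : Bool) : SL2 := ⟨dec (tbcode bl), by cases bl <;> exact det_dec (by decide) (by decide)⟩

lemma code_inv (A : SL2) : code ((A⁻¹ : SL2) : M2) = ninv (code (A : M2)) := by
  rw [Matrix.SpecialLinearGroup.coe_inv]
  have h : dec (ninv (code (A : M2))) = adjugate (A : M2) := by
    rw [dec_ninv (code_lt _), dec_code]
  rw [← h, code_dec (ninv_lt _)]

lemma mk_eq_of {C A : SL2} (h : (C : M2) = (A : M2) ∨ (C : M2) = -(A : M2)) :
    (QuotientGroup.mk C : PSL27) = QuotientGroup.mk A := by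
  rcases h with h | h
  · congr 1
    exact Subtype.ext h
  · rw [QuotientGroup.eq]
    rw [mem_center_iff']
    right
    rw [Matrix.SpecialLinearGroup.coe_mul, Matrix.SpecialLinearGroup.coe_inv, h]
    have h2 : (-((A : M2)) : M2) = (-1 : ZMod 7) • ((A : M2)) := by simp
    rw [h2, Matrix.adjugate_smul, smul_mul_assoc, Matrix.adjugate_mul, A.prop]
    norm_num

lemma ord_pow {g : PSL27} {n : ℕ} (h : orderOf g = n) : g ^ n = 1 := by
  rw [← h]; exact pow_orderOf_eq_one g

lemma ord_ne_one {g : PSL27} {n : ℕ} (h : orderOf g = n) (hn : n ≠ 1) : g ≠ 1 := by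
  intro e; rw [e, orderOf_one] at h; exact hn h.symm

lemma ord7_conds {A : SL2} (h1 : (QuotientGroup.mk A : PSL27) ^ 7 = 1)
    (h2 : (QuotientGroup.mk A : PSL27) ≠ 1) :
    ndet (code (A : M2)) = 1 ∧ (npow7 (code (A : M2)) = 344 ∨ npow7 (code (A : M2)) = 2064) ∧
    code (A : M2) ≠ 344 ∧ code (A : M2) ≠ 2064 := by
  have key : ∀ C : SL2, (QuotientGroup.mk C : PSL27) = 1 ↔ ((C : M2) = 1 ∨ (C : M2) = -1) := by
    intro C; rw [QuotientGroup.eq_one_iff, mem_center_iff']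
  refine ⟨ndet_code A.prop, ?_, ?_, ?_⟩
  · have h3 : (QuotientGroup.mk (A ^ 7) : PSL27) = 1 := by
      rw [QuotientGroup.mk_pow]; exact h1
    rw [key] at h3
    rw [npow7_code]
    rcases h3 with h | h
    · left
      rw [show ((A : M2))^7 = ((A^7 : SL2) : M2) from (Matrix.SpecialLinearGroup.coe_pow A 7).symm,
        h, code_one]
    · right
      rw [show ((A : M2))^7 = ((A^7 : SL2) : M2) from (Matrix.SpecialLinearGroup.coe_pow A 7).symm,
        h, code_negone]
  · intro hc
    exact h2 ((key A).mpr (Or.inl (code_inj (by rw [hc, code_one]))))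
  · intro hc
    exact h2 ((key A).mpr (Or.inr (code_inj (by rw [hc, code_negone]))))

lemma ord2_conds {B : SL2} (h1 : (QuotientGroup.mk B : PSL27) ^ 2 = 1)
    (h2 : (QuotientGroup.mk B : PSL27) ≠ 1) :
    ndet (code (B : M2)) = 1 ∧
    (nmul (code (B : M2)) (code (B : M2)) = 344 ∨ nmul (code (B : M2)) (code (B : M2)) = 2064) ∧
    code (B : M2) ≠ 344 ∧ code (B : M2) ≠ 2064 := by
  have key : ∀ C : SL2, (QuotientGroup.mk C : PSL27) = 1 ↔ ((C : M2) = 1 ∨ (C : M2) = -1) := by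
    intro C; rw [QuotientGroup.eq_one_iff, mem_center_iff']
  refine ⟨ndet_code B.prop, ?_, ?_, ?_⟩
  · have h3 : (QuotientGroup.mk (B ^ 2) : PSL27) = 1 := by
      rw [QuotientGroup.mk_pow]; exact h1
    rw [key] at h3
    have hsq : nmul (code (B : M2)) (code (B : M2)) = code (((B^2 : SL2)) : M2) := by
      rw [← code_mul, Matrix.SpecialLinearGroup.coe_pow, pow_two]
    rcases h3 with h | h
    · left; rw [hsq, h, code_one]
    · right; rw [hsq, h, code_negone]
  · intro hc
    exact h2 ((key B).mpr (Or.inl (code_inj (by rw [hc, code_one]))))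
  · intro hc
    exact h2 ((key B).mpr (Or.inr (code_inj (by rw [hc, code_negone]))))

lemma P7_complete {p : Nat} (hlt : p < 2401) (h1 : ndet p = 1)
    (h2 : npow7 p = 344 ∨ npow7 p = 2064) (h3 : p ≠ 344) (h4 : p ≠ 2064) :
    (∃ t ∈ P7cert, t.1 = p) ∧ (ntr p = 2 ∨ ntr p = 5) := by
  have hc := allR_spec check7 20 0 2401 L2 p (Nat.zero_le p) (by omega)
  have hin : (ndet p == 1 && (npow7 p == 344 || npow7 p == 2064) && p != 344 && p != 2064)
      = true := by
    simp only [Bool.and_eq_true, Bool.or_eq_true, beq_iff_eq, bne_iff_ne, ne_eq]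
    exact ⟨⟨⟨h1, h2⟩, h3⟩, h4⟩
  rw [check7, hin] at hc
  simp only [Bool.not_true, Bool.false_or, Bool.and_eq_true, Bool.or_eq_true, beq_iff_eq,
    List.any_eq_true] at hc
  exact hc

lemma Q4_complete {q : Nat} (hlt : q < 2401) (h1 : ndet q = 1)
    (h2 : nmul q q = 344 ∨ nmul q q = 2064) (h3 : q ≠ 344) (h4 : q ≠ 2064) :
    q ∈ Q4list := by
  have hc := allR_spec check2 20 0 2401 L2' q (Nat.zero_le q) (by omega)
  have hin : (ndet q == 1 && (nmul q q == 344 || nmul q q == 2064) && q != 344 && q != 2064)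
      = true := by
    simp only [Bool.and_eq_true, Bool.or_eq_true, beq_iff_eq, bne_iff_ne, ne_eq]
    exact ⟨⟨⟨h1, h2⟩, h3⟩, h4⟩
  rw [check2, hin] at hc
  simp only [Bool.not_true, Bool.false_or] at hc
  simpa using hc

lemma conj_cert {p : Nat} (hmem : ∃ t ∈ P7cert, t.1 = p) {A : SL2} (hA : code (A : M2) = p) :
    ∃ bl : Bool, LA.contains p = bl ∧
      IsConj (QuotientGroup.mk (TB bl) : PSL27) (QuotientGroup.mk A) := by
  obtain ⟨t, htmem, htp⟩ := hmem
  obtain ⟨hlt1, hlt2, hdet, hconj, hcls⟩ := L1 t htmem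
  rw [show (bif t.2.1 then 393 else 491) = tbcode t.2.1 from rfl] at hconj
  rw [htp] at hcls hconj hlt1
  refine ⟨t.2.1, hcls, ?_⟩
  set R : SL2 := ⟨dec t.2.2, det_dec hlt2 hdet⟩ with hR
  rw [isConj_iff]
  refine ⟨QuotientGroup.mk R, ?_⟩
  have hmk : QuotientGroup.mk (R * TB t.2.1 * R⁻¹ : SL2) = (QuotientGroup.mk A : PSL27) := by
    apply mk_eq_of
    have hcoe : ((R * TB t.2.1 * R⁻¹ : SL2) : M2)
        = dec (nmul (nmul t.2.2 (tbcode t.2.1)) (ninv t.2.2)) := by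
      rw [dec_nmul, dec_nmul, dec_ninv hlt2]
      rw [Matrix.SpecialLinearGroup.coe_mul, Matrix.SpecialLinearGroup.coe_mul,
        Matrix.SpecialLinearGroup.coe_inv]
      rfl
    rcases hconj with h | h
    · left; rw [hcoe, h, ← hA, dec_code]
    · right; rw [hcoe, h, dec_nneg hlt1, ← hA, dec_code]
  rw [← hmk, QuotientGroup.mk_mul, QuotientGroup.mk_mul, QuotientGroup.mk_inv]

end PSLAux

open PSLAux in
/-- In `PSL(2,7)`, if `x`, `y`, `x*y` have orders `7`, `2`, `7`, then `x` is
conjugate to `(x*y)⁻¹`. -/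
theorem psl27_727_conjugate (x y : PSL27)
    (hx : orderOf x = 7) (hy : orderOf y = 2) (hxy : orderOf (x * y) = 7) :
    IsConj x (x * y)⁻¹ := by
  obtain ⟨A, rfl⟩ := QuotientGroup.mk_surjective x
  obtain ⟨B, rfl⟩ := QuotientGroup.mk_surjective y
  rw [← QuotientGroup.mk_mul] at hxy ⊢
  have cA := ord7_conds (ord_pow hx) (ord_ne_one hx (by norm_num))
  have cB := ord2_conds (ord_pow hy) (ord_ne_one hy (by norm_num))
  have cAB := ord7_conds (ord_pow hxy) (ord_ne_one hxy (by norm_num))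
  have hz : orderOf (QuotientGroup.mk ((A*B)⁻¹) : PSL27) = 7 := by
    rw [QuotientGroup.mk_inv, orderOf_inv]; exact hxy
  have cABi := ord7_conds (ord_pow hz) (ord_ne_one hz (by norm_num))
  have PA := P7_complete (code_lt _) cA.1 cA.2.1 cA.2.2.1 cA.2.2.2
  have PAB := P7_complete (code_lt _) cAB.1 cAB.2.1 cAB.2.2.1 cAB.2.2.2
  have PABi := P7_complete (code_lt _) cABi.1 cABi.2.1 cABi.2.2.1 cABi.2.2.2
  have QB := Q4_complete (code_lt _) cB.1 cB.2.1 cB.2.2.1 cB.2.2.2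
  obtain ⟨cc1, hcls1, hconj1⟩ := conj_cert PA.1 rfl
  obtain ⟨cc2, hcls2, hconj2⟩ := conj_cert PABi.1 rfl
  obtain ⟨t, htmem, htp⟩ := PA.1
  have hm : nmul (code ((A : M2))) (code ((B : M2))) = code (((A*B : SL2) : M2)) := by
    rw [Matrix.SpecialLinearGroup.coe_mul, code_mul]
  have hL3 := L3 t htmem (code ((B : M2))) QB (by
    rw [htp, hm]
    exact ⟨PAB.2, cAB.2.2.1, cAB.2.2.2⟩)
  rw [htp, hm] at hL3
  have hiv : ninv (code (((A*B : SL2) : M2))) = code ((((A*B)⁻¹ : SL2) : M2)) :=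
    (code_inv _).symm
  rw [hiv] at hL3
  have hcc : cc1 = cc2 := by rw [← hcls1, ← hcls2, hL3]
  rw [hcc] at hconj1
  have hfin := hconj1.symm.trans hconj2
  rwa [QuotientGroup.mk_inv] at hfin
end

section
/- For every generating pair (x,y) of G = SL(2,𝔽₈) with orderOf x = 7, orderOf y = 2 and orderOf (x*y) = 7, there is no group automorphism α of G with α x = (x*y)⁻¹ and α y = y. (The two maps of type {7,7} with group SL(2,8) form a dual pair; neither is self-dual.) -/
open Matrix

abbrev SL28 : Type := Matrix.SpecialLinearGroup (Fin 2) (GaloisField 2 3)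

namespace SL28Aux

abbrev F : Type := GaloisField 2 3

lemma htwo : (2 : F) = 0 := by
  have := CharP.cast_eq_zero F 2
  exact_mod_cast this

lemma add_self (a : F) : a + a = 0 := by
  linear_combination a * htwo

lemma sq_inj {a b : F} (h : a * a = b * b) : a = b := by
  have h2 : (a + b) * (a + b) = 0 := by linear_combination h + (a*b+b*b) * htwo
  have h3 := mul_self_eq_zero.mp h2
  linear_combination h3 - b * htwo

lemma sq_surj (a : F) : ∃ s : F, s * s = a := by
  have hinj : Function.Injective (fun x : F => x * x) := fun x y h => sq_inj h
  have hsurj := Finite.surjective_of_injective hinj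
  obtain ⟨s, hs⟩ := hsurj a
  exact ⟨s, hs⟩

lemma card_F : Nat.card F = 8 := by
  have := GaloisField.card 2 3 (by norm_num)
  simpa using this

lemma exists_lam : ∃ l : F, l ≠ 0 ∧ l ≠ 1 := by
  have : Fintype F := Fintype.ofFinite F
  letI := Classical.decEq F
  have hc : Fintype.card F = 8 := by rw [← Nat.card_eq_fintype_card]; exact card_F
  have hne : (Finset.univ \ ({0, 1} : Finset F)).Nonempty := by
    rw [← Finset.card_pos, Finset.card_sdiff_of_subset (Finset.subset_univ _)]
    have h1 : ({0, 1} : Finset F).card ≤ 2 := Finset.card_insert_le _ _ |>.trans (by simp)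
    have h2 : (Finset.univ : Finset F).card = 8 := by rw [Finset.card_univ, hc]
    omega
  obtain ⟨l, hl⟩ := hne
  simp only [Finset.mem_sdiff, Finset.mem_insert, Finset.mem_singleton] at hl
  exact ⟨l, fun h => hl.2 (Or.inl h), fun h => hl.2 (Or.inr h)⟩


lemma mat_ext {a b c d e f g h : F} (H : !![a,b;c,d] = !![e,f;g,h]) :
    a = e ∧ b = f ∧ c = g ∧ d = h := by
  refine ⟨?_, ?_, ?_, ?_⟩
  · simpa using congrFun (congrFun H 0) 0
  · simpa using congrFun (congrFun H 0) 1
  · simpa using congrFun (congrFun H 1) 0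
  · simpa using congrFun (congrFun H 1) 1

/-- the unipotent `u b = [[1,b],[0,1]]` -/
noncomputable def u (b : F) : SL28 := ⟨!![1, b; 0, 1], by simp [Matrix.det_fin_two_of]⟩

lemma u_coe (b : F) : (u b : Matrix (Fin 2) (Fin 2) F) = !![1, b; 0, 1] := rfl

lemma u_mul (a b : F) : u a * u b = u (a + b) := by
  apply Subtype.ext
  rw [Matrix.SpecialLinearGroup.coe_mul, u_coe, u_coe, u_coe]
  simp [Matrix.mul_fin_two, add_comm]

lemma u_inj {a b : F} (h : u a = u b) : a = b :=
  (mat_ext (congrArg Subtype.val h)).2.1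

lemma u_zero : u 0 = 1 := by
  apply Subtype.ext
  rw [u_coe, Matrix.SpecialLinearGroup.coe_one, Matrix.one_fin_two]

lemma u_comm (a b : F) : u a * u b = u b * u a := by rw [u_mul, u_mul, add_comm]

lemma u_one_inv : (u 1)⁻¹ = u 1 := by
  rw [inv_eq_iff_mul_eq_one, u_mul]
  rw [show (1 : F) + 1 = 0 by linear_combination htwo, u_zero]

/-- centralizer of `u 1` consists of the `u b` -/
lemma cent {g : SL28} (h : g * u 1 = u 1 * g) : ∃ b : F, g = u b := by
  have hA := congrArg Subtype.val h
  rw [Matrix.SpecialLinearGroup.coe_mul, Matrix.SpecialLinearGroup.coe_mul, u_coe] at hA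
  set A : Matrix (Fin 2) (Fin 2) F := (g : Matrix (Fin 2) (Fin 2) F) with hAdef
  have hdet : A.det = 1 := g.2
  have heta : A = !![A 0 0, A 0 1; A 1 0, A 1 1] := Matrix.eta_fin_two A
  rw [heta] at hA hdet
  rw [Matrix.mul_fin_two, Matrix.mul_fin_two] at hA
  obtain ⟨h1, h2, h3, h4⟩ := mat_ext hA
  -- h1 : A00*1 + A01*0 = 1*A00 + 1*A10 etc
  have hc : A 1 0 = 0 := by linear_combination -h1
  have had : A 0 0 = A 1 1 := by linear_combination h2
  rw [Matrix.det_fin_two_of] at hdet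
  have ha1 : A 0 0 = 1 := by
    apply sq_inj
    rw [mul_one]
    linear_combination hdet + A 0 1 * hc - A 0 0 * had + (A 0 0 ^ 2 - A 0 0 * A 1 1) * htwo
  refine ⟨A 0 1, Subtype.ext ?_⟩
  rw [u_coe, ← hAdef, heta, hc, ha1, ← had, ha1]
  simp


lemma neg_one_F : (-1 : F) = 1 := by linear_combination -htwo

lemma mat_mk {a b c d e f g h : F} (H1 : a = e) (H2 : b = f) (H3 : c = g) (H4 : d = h) :
    !![a,b;c,d] = !![e,f;g,h] := by subst H1; subst H2; subst H3; subst H4; rfl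

/-- diagonal torus element -/
noncomputable def tm (l : F) (hl : l ≠ 0) : SL28 :=
  ⟨!![l, 0; 0, l⁻¹], by simp [Matrix.det_fin_two_of, mul_inv_cancel₀ hl]⟩

lemma tm_mul_u (l : F) (hl : l ≠ 0) (b : F) :
    tm l hl * u b = u (l * l * b) * tm l hl := by
  apply Subtype.ext
  rw [Matrix.SpecialLinearGroup.coe_mul, Matrix.SpecialLinearGroup.coe_mul]
  show !![l, 0; 0, l⁻¹] * !![1, b; 0, 1] = !![1, l*l*b; 0, 1] * !![l, 0; 0, l⁻¹]
  rw [Matrix.mul_fin_two, Matrix.mul_fin_two]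
  exact mat_mk (by ring) (by field_simp; ring) (by ring) (by ring)

/-- an element almost-normalizing the unipotent group is upper triangular and
conjugation on `u`'s is by a square -/
lemma triang {s : SL28} {d : F} (h : s * u 1 = u d * s) :
    ∃ p : F, p ≠ 0 ∧ ∀ c, s * u c = u (p * p * c) * s := by
  obtain ⟨p, q, r, w, hS⟩ : ∃ p q r w, (s : Matrix (Fin 2) (Fin 2) F) = !![p,q;r,w] :=
    ⟨_, _, _, _, Matrix.eta_fin_two _⟩
  have hdet : p * w - q * r = 1 := by
    have := s.2
    rw [hS, Matrix.det_fin_two_of] at this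
    exact this
  have hA := congrArg Subtype.val h
  rw [Matrix.SpecialLinearGroup.coe_mul, Matrix.SpecialLinearGroup.coe_mul, hS,
    show ((u 1 : SL28) : Matrix (Fin 2) (Fin 2) F) = !![1,1;0,1] from rfl,
    show ((u d : SL28) : Matrix (Fin 2) (Fin 2) F) = !![1,d;0,1] from rfl,
    Matrix.mul_fin_two, Matrix.mul_fin_two] at hA
  obtain ⟨h1, h2, h3, h4⟩ := mat_ext hA
  have hr : r = 0 := by linear_combination h4
  refine ⟨p, ?_, ?_⟩
  · intro h0
    rw [h0, hr] at hdet
    simp at hdet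
  · intro c
    apply Subtype.ext
    rw [Matrix.SpecialLinearGroup.coe_mul, Matrix.SpecialLinearGroup.coe_mul, hS,
      show ((u c : SL28) : Matrix (Fin 2) (Fin 2) F) = !![1,c;0,1] from rfl,
      show ((u (p*p*c) : SL28) : Matrix (Fin 2) (Fin 2) F) = !![1,p*p*c;0,1] from rfl,
      Matrix.mul_fin_two, Matrix.mul_fin_two]
    exact mat_mk (by linear_combination (-(p*p*c)) * hr)
      (by linear_combination (-(p*c)) * hdet + (-(p*c*q)) * hr)
      (by ring) (by linear_combination c * hr)

/-- every involution is conjugate to `u 1` -/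
lemma conj_invol {y : SL28} (h2 : y * y = 1) (h1 : y ≠ 1) :
    ∃ M : SL28, y * M = M * u 1 := by
  obtain ⟨a, b, c, d, hS⟩ : ∃ a b c d, (y : Matrix (Fin 2) (Fin 2) F) = !![a,b;c,d] :=
    ⟨_, _, _, _, Matrix.eta_fin_two _⟩
  have hdet : a * d - b * c = 1 := by
    have := y.2
    rw [hS, Matrix.det_fin_two_of] at this
    exact this
  have hA := congrArg Subtype.val h2
  rw [Matrix.SpecialLinearGroup.coe_mul, Matrix.SpecialLinearGroup.coe_one, hS,
    Matrix.mul_fin_two, Matrix.one_fin_two] at hA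
  obtain ⟨e1, e2, e3, e4⟩ := mat_ext hA
  by_cases hcz : c = 0
  · -- upper triangular case : y = [[1,b],[0,1]], b ≠ 0
    have ha : a = 1 := by
      apply sq_inj
      rw [mul_one]
      linear_combination e1 - b * hcz
    have hd : d = 1 := by
      apply sq_inj
      rw [mul_one]
      linear_combination e4 - b * hcz
    have hbne : b ≠ 0 := by
      intro hb
      apply h1
      apply Subtype.ext
      rw [hS, ha, hd, hb, hcz, Matrix.SpecialLinearGroup.coe_one, Matrix.one_fin_two]
    obtain ⟨sg, hsg⟩ := sq_surj b
    have hsgne : sg ≠ 0 := by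
      intro h0
      rw [h0, mul_zero] at hsg
      exact hbne hsg.symm
    refine ⟨tm sg hsgne, Subtype.ext ?_⟩
    rw [Matrix.SpecialLinearGroup.coe_mul, Matrix.SpecialLinearGroup.coe_mul,
      show ((tm sg hsgne : SL28) : Matrix (Fin 2) (Fin 2) F) = !![sg,0;0,sg⁻¹] from rfl,
      show ((u 1 : SL28) : Matrix (Fin 2) (Fin 2) F) = !![1,1;0,1] from rfl,
      hS, ha, hd, hcz, Matrix.mul_fin_two, Matrix.mul_fin_two]
    refine mat_mk (by ring) ?_ (by ring) (by ring)
    rw [show sg * 1 + 0 * 1 = sg by ring, show 1 * 0 + b * sg⁻¹ = b * sg⁻¹ by ring]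
    field_simp
    linear_combination -hsg
  · -- c ≠ 0
    obtain ⟨sg, hsg⟩ := sq_surj c⁻¹
    have hsgne : sg ≠ 0 := by
      intro h0
      rw [h0, mul_zero] at hsg
      exact (inv_ne_zero hcz) hsg.symm
    have hsc : sg * sg * c = 1 := by rw [hsg]; exact inv_mul_cancel₀ hcz
    have hdetM : (sg • !![a + 1, 1; c, 0]).det = 1 := by
      rw [Matrix.det_smul, Matrix.det_fin_two_of]
      simp only [Fintype.card_fin, smul_eq_mul]
      linear_combination -hsc + neg_one_F
    refine ⟨⟨sg • !![a + 1, 1; c, 0], hdetM⟩, Subtype.ext ?_⟩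
    show (y : Matrix (Fin 2) (Fin 2) F) * (sg • !![a + 1, 1; c, 0])
      = (sg • !![a + 1, 1; c, 0]) * !![1,1;0,1]
    rw [Matrix.mul_smul, Matrix.smul_mul]
    congr 1
    rw [hS, Matrix.mul_fin_two, Matrix.mul_fin_two]
    exact mat_mk (by linear_combination e1) (by linear_combination -htwo)
      (by linear_combination e3) (by ring)


lemma pow_coe (m : Fˣ) (k : ℕ) : ((m ^ k : Fˣ) : F) = (m : F) ^ k := Units.val_pow_eq_pow_val m k

/-- the crucial lemma: no automorphism of `SL(2,8)` squares to conjugation by `u 1`. -/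
lemma key (β : SL28 ≃* SL28) (hy : β (u 1) = u 1)
    (hsq : ∀ g : SL28, β (β g) = u 1 * g * (u 1)⁻¹) : False := by
  obtain ⟨l, hl0, hl1⟩ := exists_lam
  set t : SL28 := tm l hl0 with ht
  -- the image of the unipotent subgroup
  have hcomm : ∀ b : F, β (u b) * u 1 = u 1 * β (u b) := by
    intro b
    rw [← hy, ← _root_.map_mul, ← _root_.map_mul, u_comm]
  choose f hf using fun b => cent (hcomm b)
  have f1 : f 1 = 1 := u_inj ((hf 1).symm.trans hy)
  have fadd : ∀ a b : F, f (a + b) = f a + f b := by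
    intro a b
    apply u_inj
    rw [← hf, ← u_mul, _root_.map_mul, hf, hf, u_mul]
  have ff : ∀ b : F, f (f b) = b := by
    intro b
    apply u_inj
    rw [← hf, ← hf, hsq, u_one_inv, u_mul, u_mul]
    congr 1
    linear_combination htwo
  have f0 : f 0 = 0 := by
    have h' := fadd 0 0
    rw [add_zero] at h'
    have h'' : f 0 + f 0 = f 0 + 0 := by rw [add_zero]; exact h'.symm
    exact add_left_cancel h''
  -- the image of the torus element
  have htu : ∀ b : F, t * u b = u (l * l * b) * t := tm_mul_u l hl0
  set s : SL28 := β t with hs'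
  have hst1 : s * u 1 = u (f (l * l)) * s := by
    have h0 := congrArg β (htu 1)
    rw [_root_.map_mul, _root_.map_mul, hy, hf, mul_one] at h0
    exact h0
  obtain ⟨p, hp0, hs⟩ := triang hst1
  have hkey : ∀ b : F, f (l * l * b) = p * p * f b := by
    intro b
    have h0 := congrArg β (htu b)
    rw [_root_.map_mul, _root_.map_mul, hf, hf, hs (f b)] at h0
    rw [← hs'] at h0
    exact u_inj (mul_right_cancel h0.symm)
  set μ : F := l * l with hμ
  set ν : F := p * p with hν
  have hμ0 : μ ≠ 0 := mul_ne_zero hl0 hl0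
  have hν0 : ν ≠ 0 := mul_ne_zero hp0 hp0
  have hμ1 : μ ≠ 1 := by
    intro h0
    exact hl1 (sq_inj (by rw [← hμ, h0, mul_one]))
  have hfpow : ∀ k : ℕ, f (μ ^ k) = ν ^ k := by
    intro k
    induction k with
    | zero => simpa using f1
    | succ n ih =>
        rw [pow_succ, mul_comm (μ ^ n) μ, hkey, ih, pow_succ]
        ring
  -- μ generates the multiplicative group
  have hcardu : Nat.card Fˣ = 7 := by rw [Nat.card_units, card_F]
  set μ' : Fˣ := Units.mk0 μ hμ0 with hμ'
  have hord : orderOf μ' = 7 := by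
    have hdvd : orderOf μ' ∣ 7 := hcardu ▸ orderOf_dvd_natCard μ'
    rcases (Nat.Prime.eq_one_or_self_of_dvd (by norm_num : Nat.Prime 7) _ hdvd) with h1 | h7
    · exfalso
      rw [orderOf_eq_one_iff] at h1
      exact hμ1 (by rw [← Units.val_one, ← h1, hμ']; rfl)
    · exact h7
  have hgen : ∀ c : F, c ≠ 0 → ∃ k : ℕ, c = μ ^ k := by
    intro c hc
    have htop : Subgroup.zpowers μ' = ⊤ := by
      apply Subgroup.eq_top_of_card_eq
      rw [Nat.card_zpowers, hord, hcardu]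
    have hmem : Units.mk0 c hc ∈ Subgroup.zpowers μ' := htop ▸ Subgroup.mem_top _
    obtain ⟨k, hk⟩ := (mem_powers_iff_mem_zpowers).mpr hmem
    refine ⟨k, ?_⟩
    have := congrArg Units.val hk
    rw [pow_coe] at this
    exact this.symm
  have hμ7 : μ ^ 7 = 1 := by
    have := pow_orderOf_eq_one μ'
    rw [hord] at this
    have := congrArg Units.val this
    rw [pow_coe] at this
    exact this
  obtain ⟨m, hm⟩ := hgen ν hν0
  -- m² ≡ 1 mod 7
  have hmm : μ ^ (m * m) = μ ^ 1 := by
    have h1 : f μ = ν := by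
      have := hfpow 1
      rwa [pow_one, pow_one] at this
    have h2 : f ν = μ := by rw [← h1, ff]
    have h3 : f ν = μ ^ (m * m) := by
      rw [hm, hfpow, hm, ← pow_mul, mul_comm]
    rw [← h3, h2, pow_one]
  have hmod : (m * m) % 7 = 1 % 7 := by
    have hu : μ' ^ (m * m) = μ' ^ 1 := by
      apply Units.ext
      rw [pow_coe, pow_coe]
      exact hmm
    have := pow_eq_pow_iff_modEq.mp hu
    rw [hord] at this
    exact this
  have hr : m % 7 = 1 ∨ m % 7 = 6 := by
    have h1 : (m % 7) * (m % 7) % 7 = 1 := by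
      rw [← Nat.mul_mod]; omega
    have h2 : m % 7 < 7 := Nat.mod_lt _ (by norm_num)
    interval_cases h : m % 7 <;> omega
  have hνr : ν = μ ^ (m % 7) := by
    conv_lhs => rw [hm]
    conv_lhs => rw [show m = 7 * (m / 7) + m % 7 from (Nat.div_add_mod m 7).symm]
    rw [pow_add, pow_mul, hμ7, one_pow, one_mul]
  rcases hr with h1 | h6
  · -- case ν = μ : f is the identity, contradiction with conj by u 1
    rw [h1, pow_one] at hνr
    have hfid : ∀ b : F, f b = b := by
      intro b
      rcases eq_or_ne b 0 with rfl | hb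
      · exact f0
      · obtain ⟨k, hk⟩ := hgen b hb
        rw [hk, hfpow, hνr]
    -- s = t * u c₀
    have hsc : ∀ c : F, s * u c = u (μ * c) * s := by
      intro c
      rw [hs c, hνr]
    have hzc : (t⁻¹ * s) * u 1 = u 1 * (t⁻¹ * s) := by
      have e1 : t⁻¹ * u (μ * 1) = u 1 * t⁻¹ := by
        have h' := htu 1
        calc t⁻¹ * u (μ * 1) = t⁻¹ * (u (μ * 1) * t) * t⁻¹ := by group
        _ = t⁻¹ * (t * u 1) * t⁻¹ := by rw [← h']
        _ = u 1 * t⁻¹ := by group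
      calc (t⁻¹ * s) * u 1 = t⁻¹ * (u (μ * 1)) * s := by rw [mul_assoc, hsc 1]; group
      _ = u 1 * t⁻¹ * s := by rw [e1]
      _ = u 1 * (t⁻¹ * s) := by group
    obtain ⟨c₀, hc₀⟩ := cent hzc
    have hst : s = t * u c₀ := by
      rw [← hc₀]
      group
    have hβs : β s = t := by
      rw [hst, _root_.map_mul, hf, hfid, ← hs', hst]
      rw [mul_assoc, u_mul, add_self, u_zero, mul_one]
    have hβs2 : β s = u 1 * t * (u 1)⁻¹ := by rw [hs', hsq]
    have : u 1 * t = t * u 1 := by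
      rw [hβs2, u_one_inv] at hβs
      calc u 1 * t = (u 1 * t * u 1) * u 1 := by
            rw [mul_assoc, u_mul, add_self, u_zero, mul_one]
      _ = t * u 1 := by rw [hβs]
    rw [htu 1, mul_one] at this
    have := u_inj (mul_right_cancel this)
    exact hμ1 this.symm
  · -- case ν = μ⁶ : f is inversion, not additive, contradiction
    rw [h6] at hνr
    have hone : (1 : F) + μ ≠ 0 := by
      intro h0
      apply hμ1
      linear_combination h0 - htwo
    obtain ⟨k, hk⟩ := hgen (1 + μ) hone
    have e1 : f (1 + μ) = 1 + μ ^ 6 := by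
      rw [fadd, f1]
      have := hfpow 1
      rw [pow_one, pow_one] at this
      rw [this, hνr]
    have e2 : f (1 + μ) = (1 + μ) ^ 6 := by
      rw [hk, hfpow, hνr, ← pow_mul, mul_comm 6 k, pow_mul]
    have h6' : (1 + μ) ^ 6 = 1 + μ ^ 6 := by rw [← e2, e1]
    have hq : μ ^ 2 * (1 + μ ^ 2) = 0 := by
      linear_combination h6' - (3*μ + 7*μ^2 + 10*μ^3 + 7*μ^4 + 3*μ^5) * htwo
    rcases mul_eq_zero.mp hq with h0 | h0
    · exact hμ0 (pow_eq_zero_iff (by norm_num)|>.mp h0)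
    · apply hμ1
      apply sq_inj
      rw [mul_one]
      linear_combination -h0 + μ^2 * htwo
end SL28Aux


/-- No generating pair of type `(7,2,7)` in `SL(2,8)` corresponds to a self-dual map:
no automorphism sends `x ↦ (x*y)⁻¹`, `y ↦ y`. -/
theorem sl28_727_not_self_dual (x y : SL28)
    (hgen : Subgroup.closure ({x, y} : Set SL28) = ⊤)
    (hx : orderOf x = 7) (hy : orderOf y = 2) (hxy : orderOf (x * y) = 7) :
    ¬ ∃ α : SL28 ≃* SL28, α x = (x * y)⁻¹ ∧ α y = y := by
  rintro ⟨α, hαx, hαy⟩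
  have hy2 : y * y = 1 := by
    have h := pow_orderOf_eq_one y
    rw [hy, pow_two] at h
    exact h
  have hy1 : y ≠ 1 := by
    intro h
    rw [h, orderOf_one] at hy
    norm_num at hy
  have hyi : y⁻¹ = y := inv_eq_of_mul_eq_one_right hy2
  -- α squared is conjugation by y
  have hsq : ∀ g : SL28, α (α g) = y * g * y⁻¹ := by
    intro g
    have hg : g ∈ Subgroup.closure ({x, y} : Set SL28) := by
      rw [hgen]; exact Subgroup.mem_top g
    refine Subgroup.closure_induction (fun z hz => ?_) ?_
      (fun a b _ _ iha ihb => ?_) (fun a _ iha => ?_) hg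
    · rcases hz with hzx | hzy
      · subst hzx
        calc α (α z) = ((z * y)⁻¹ * y)⁻¹ := by
              rw [hαx, map_inv, _root_.map_mul, hαx, hαy]
        _ = y⁻¹ * (z * y) := by group
        _ = y * z * y⁻¹ := by rw [hyi]; group
      · rw [Set.mem_singleton_iff] at hzy
        subst hzy
        rw [hαy, hαy, hyi, mul_assoc, hy2, mul_one]
    · simp
    · rw [_root_.map_mul, _root_.map_mul, iha, ihb]
      group
    · rw [map_inv, map_inv, iha]
      group
  -- conjugate the situation so that y becomes u 1
  obtain ⟨M, hM⟩ := SL28Aux.conj_invol hy2 hy1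
  have hMu : M * SL28Aux.u 1 * M⁻¹ = y := by rw [← hM]; group
  have hMy : M⁻¹ * y * M = SL28Aux.u 1 := by
    have h' : M⁻¹ * (y * M) = SL28Aux.u 1 := by rw [hM]; group
    rw [← h']; group
  set β : SL28 ≃* SL28 := (MulAut.conj M).trans (α.trans (MulAut.conj M⁻¹)) with hβdef
  have hβ : ∀ g : SL28, β g = M⁻¹ * α (M * g * M⁻¹) * M := by
    intro g
    show (MulAut.conj M⁻¹) (α ((MulAut.conj M) g)) = _
    rw [MulAut.conj_apply, MulAut.conj_apply, inv_inv]
  have hβy : β (SL28Aux.u 1) = SL28Aux.u 1 := by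
    rw [hβ, hMu, hαy, hMy]
  have hβsq : ∀ g : SL28, β (β g) = SL28Aux.u 1 * g * (SL28Aux.u 1)⁻¹ := by
    intro g
    rw [hβ, hβ]
    have e : M * (M⁻¹ * α (M * g * M⁻¹) * M) * M⁻¹ = α (M * g * M⁻¹) := by group
    rw [e, hsq, SL28Aux.u_one_inv, hyi]
    calc M⁻¹ * (y * (M * g * M⁻¹) * y) * M
        = (M⁻¹ * y * M) * g * (M⁻¹ * y * M) := by group
    _ = SL28Aux.u 1 * g * SL28Aux.u 1 := by rw [hMy]
  exact SL28Aux.key β hβy hβsq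
end

section
/- If x, y are elements of G = SL(2,𝔽₈) with orderOf x = 7, orderOf y = 2, orderOf (x*y) = 7, and x is conjugate in G to (x*y)⁻¹, then the subgroup generated by {x,y} is a proper subgroup of G (such triples lie inside the normalizer of a Sylow 2-subgroup and do not generate G). -/
open Matrix

namespace SL727Aux

variable {K : Type*} [Field K]

local notation "SL2" => Matrix.SpecialLinearGroup (Fin 2) K
local notation "M2" => Matrix (Fin 2) (Fin 2) K

/-- Cayley–Hamilton for 2×2 determinant-one matrices. -/
lemma CH2 (a b c d : K) (h : a * d - b * c = 1) :
    !![a, b; c, d] * !![a, b; c, d] = (a + d) • !![a, b; c, d] - (1 : M2) := by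
  rw [mul_fin_two]
  ext i j
  fin_cases i <;> fin_cases j <;>
    simp [Matrix.one_apply] <;>
    first
      | ring1
      | linear_combination h
      | linear_combination -h
      | linear_combination 2*h
      | linear_combination -2*h

/-- Cayley–Hamilton for 2×2 determinant-one matrices. -/
lemma CH (A : SL2) : (A : M2) * (A : M2) = trace (A : M2) • (A : M2) - 1 := by
  have hd := A.prop
  rw [det_fin_two] at hd
  rw [eta_fin_two (A : M2), trace_fin_two_of, mul_fin_two]
  rw [← mul_fin_two]
  exact CH2 _ _ _ _ hd

lemma inv_coe (A : SL2) : ((A⁻¹ : SL2) : M2) = trace (A : M2) • 1 - (A : M2) := by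
  rw [Matrix.SpecialLinearGroup.coe_inv, adjugate_fin_two]
  ext i j
  fin_cases i <;> fin_cases j <;>
    simp [trace_fin_two, Matrix.one_apply]

lemma trace_inv (A : SL2) : trace ((A⁻¹ : SL2) : M2) = trace (A : M2) := by
  rw [inv_coe, trace_sub, trace_smul, trace_one]
  simp [Fintype.card_fin]
  ring

lemma trace_sq (M : M2) : trace (M * M) = trace M * trace M - 2 * det M := by
  simp [Matrix.mul_apply, Fin.sum_univ_two, trace_fin_two, det_fin_two]
  ring

lemma trace_conj (g A : SL2) : trace ((g * A * g⁻¹ : SL2) : M2) = trace (A : M2) := by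
  rw [Matrix.SpecialLinearGroup.coe_mul, Matrix.SpecialLinearGroup.coe_mul,
    trace_mul_comm, ← Matrix.SpecialLinearGroup.coe_mul, ← Matrix.SpecialLinearGroup.coe_mul]
  congr 1
  group


lemma neg_one_eq_one (h2 : (1 : K) + 1 = 0) : (-1 : M2) = 1 := by
  have hk : (-1 : K) = 1 := neg_eq_of_add_eq_zero_left h2
  ext i j
  by_cases hij : i = j <;> simp [Matrix.one_apply, hij, hk]

lemma sq_one_of_trace_zero (h2 : (1 : K) + 1 = 0) (A : SL2) (h : trace (A : M2) = 0) :
    A * A = 1 := by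
  apply Subtype.coe_injective
  show ((A * A : SL2) : M2) = ((1 : SL2) : M2)
  rw [Matrix.SpecialLinearGroup.coe_mul, Matrix.SpecialLinearGroup.coe_one, CH A, h]
  rw [zero_smul, zero_sub, neg_one_eq_one h2]

lemma trace_sq_one (h2 : (1 : K) + 1 = 0) (y : SL2) (hy : y * y = 1) :
    trace (y : M2) = 0 := by
  have hc := CH y
  have hyy : (y : M2) * (y : M2) = 1 := by
    rw [← Matrix.SpecialLinearGroup.coe_mul, hy, Matrix.SpecialLinearGroup.coe_one]
  rw [hyy] at hc
  have hsmul : trace (y : M2) • (y : M2) = 0 := by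
    have : (1 : M2) + 1 = 0 := by
      ext i j
      by_cases hij : i = j <;> simp [Matrix.one_apply, hij, h2]
    have h4 : trace (y : M2) • (y : M2) = (1 : M2) + 1 := sub_eq_iff_eq_add.mp hc.symm
    rw [h4, this]
  by_contra ht
  have hY : (y : M2) = 0 := by
    ext i j
    have := congrFun (congrFun (congrArg (fun M => M) hsmul) i) j
    simp only [Matrix.smul_apply, Matrix.zero_apply, smul_eq_mul] at this
    rcases mul_eq_zero.mp this with h' | h'
    · exact absurd h' ht
    · simpa using h'
  have hd := y.prop
  rw [det_fin_two, hY] at hd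
  simp at hd

lemma trace_rec (A B : SL2) (m : ℕ) :
    trace ((A ^ (m + 2) * B : SL2) : M2) =
      trace (A : M2) * trace ((A ^ (m + 1) * B : SL2) : M2) -
        trace ((A ^ m * B : SL2) : M2) := by
  have key : ((A ^ (m + 2) * B : SL2) : M2) =
      trace (A : M2) • ((A ^ (m + 1) * B : SL2) : M2) - ((A ^ m * B : SL2) : M2) := by
    simp only [Matrix.SpecialLinearGroup.coe_mul, Matrix.SpecialLinearGroup.coe_pow]
    have : ((A : M2)) ^ (m + 2) = (A : M2) ^ m * ((A : M2) * (A : M2)) := by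
      rw [pow_add, pow_two]
    rw [this, CH A]
    have h1 : ((A : M2)) ^ (m + 1) = (A : M2) ^ m * (A : M2) := pow_succ _ _
    rw [h1]
    noncomm_ring
  rw [key, trace_sub, trace_smul, smul_eq_mul]

lemma trace_pow_mul (h2 : (1 : K) + 1 = 0) (x y : SL2)
    (hy : trace (y : M2) = 0)
    (hxy : trace ((x * y : SL2) : M2) = trace (x : M2)) :
    ∀ m : ℕ, trace ((x ^ m * y : SL2) : M2) = trace ((x ^ m : SL2) : M2) := by
  have h20 : (2 : K) = 0 := by linear_combination h2
  have key : ∀ m : ℕ, trace ((x ^ m * y : SL2) : M2) = trace ((x ^ m : SL2) : M2) ∧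
      trace ((x ^ (m + 1) * y : SL2) : M2) = trace ((x ^ (m + 1) : SL2) : M2) := by
    intro m
    induction m with
    | zero =>
      constructor
      · simpa [hy] using (by
          rw [pow_zero, one_mul]
          simp [Matrix.SpecialLinearGroup.coe_one, Matrix.trace_one, hy, h20] : trace ((x ^ 0 * y : SL2) : M2) = trace ((x ^ 0 : SL2) : M2))
      · simpa [pow_one] using hxy
    | succ n ih =>
      refine ⟨ih.2, ?_⟩
      have h1 := trace_rec x y n
      have h2' := trace_rec x 1 n
      simp only [mul_one] at h2'
      rw [h1, h2', ih.1, ih.2]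
  exact fun m => (key m).1

lemma trace_comm_zero (h2 : (1 : K) + 1 = 0) (A B : SL2) (hB : B * B = 1)
    (h : trace ((A * B : SL2) : M2) = trace (A : M2)) :
    (B * A * B * A⁻¹) * (B * A * B * A⁻¹) = 1 := by
  apply sq_one_of_trace_zero h2
  have hbb : (B : M2) * (B : M2) = 1 := by
    rw [← Matrix.SpecialLinearGroup.coe_mul, hB, Matrix.SpecialLinearGroup.coe_one]
  have hco : ((B * A * B * A⁻¹ : SL2) : M2) =
      (B : M2) * (A : M2) * (B : M2) * (trace (A : M2) • 1 - (A : M2)) := by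
    simp only [Matrix.SpecialLinearGroup.coe_mul, inv_coe]
  rw [hco, mul_sub, trace_sub]
  have t1 : trace ((B : M2) * (A : M2) * (B : M2) * (trace (A : M2) • (1 : M2))) =
      trace (A : M2) * trace (A : M2) := by
    rw [mul_smul_comm, mul_one, trace_smul, smul_eq_mul]
    have : trace ((B : M2) * (A : M2) * (B : M2)) = trace (A : M2) := by
      rw [trace_mul_comm]
      rw [show (B : M2) * ((B : M2) * (A : M2)) = ((B : M2) * (B : M2)) * (A : M2) from
        (mul_assoc _ _ _).symm]
      rw [hbb, one_mul]
    rw [this]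
  have t2 : trace ((B : M2) * (A : M2) * (B : M2) * (A : M2)) =
      trace (A : M2) * trace (A : M2) - 2 := by
    have hform : (B : M2) * (A : M2) * (B : M2) * (A : M2) =
        ((B : M2) * (A : M2)) * ((B : M2) * (A : M2)) := mul_assoc _ _ _
    rw [hform, trace_sq]
    have hdet : det ((B : M2) * (A : M2)) = 1 := by
      rw [← Matrix.SpecialLinearGroup.coe_mul]
      exact (B * A).prop
    have htr : trace ((B : M2) * (A : M2)) = trace (A : M2) := by
      rw [trace_mul_comm, ← Matrix.SpecialLinearGroup.coe_mul, h]
    rw [hdet, htr]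
    ring
  rw [t1, t2]
  linear_combination h2

end SL727Aux


open SL727Aux Subgroup in
/-- In `SL(2,8)`, a pair of type `(7,2,7)` with `x` conjugate to `(x*y)⁻¹`
generates a proper subgroup. -/
theorem sl28_727_conjugate_not_generating (x y : SL28)
    (hx : orderOf x = 7) (hy : orderOf y = 2) (hxy : orderOf (x * y) = 7)
    (hconj : IsConj x (x * y)⁻¹) :
    Subgroup.closure ({x, y} : Set SL28) ≠ ⊤ := by
  classical
  haveI : Fact (Nat.Prime 2) := ⟨Nat.prime_two⟩
  haveI hfinK : Finite (GaloisField 2 3) := inferInstance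
  haveI hfinSL : Finite SL28 :=
    Finite.of_injective (fun A : SL28 => (A : Matrix (Fin 2) (Fin 2) (GaloisField 2 3)))
      Subtype.coe_injective
  have h2 : (1 : GaloisField 2 3) + 1 = 0 := by
    have h := CharP.cast_eq_zero (GaloisField 2 3) 2
    push_cast at h
    linear_combination h
  have hx7 : x ^ 7 = 1 := by rw [← hx]; exact pow_orderOf_eq_one x
  have hy2 : y * y = 1 := by
    have h := pow_orderOf_eq_one y
    rwa [hy, pow_two] at h
  -- trace facts
  have hty : trace ((y : SL28) : Matrix (Fin 2) (Fin 2) (GaloisField 2 3)) = 0 :=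
    trace_sq_one h2 y hy2
  have htxy : trace ((x * y : SL28) : Matrix (Fin 2) (Fin 2) (GaloisField 2 3)) =
      trace ((x : SL28) : Matrix (Fin 2) (Fin 2) (GaloisField 2 3)) := by
    obtain ⟨g, hg⟩ := isConj_iff.mp hconj
    calc trace ((x * y : SL28) : Matrix (Fin 2) (Fin 2) (GaloisField 2 3))
        = trace (((x * y)⁻¹ : SL28) : Matrix (Fin 2) (Fin 2) (GaloisField 2 3)) :=
          (trace_inv _).symm
      _ = trace ((g * x * g⁻¹ : SL28) : Matrix (Fin 2) (Fin 2) (GaloisField 2 3)) := by rw [hg]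
      _ = trace ((x : SL28) : Matrix (Fin 2) (Fin 2) (GaloisField 2 3)) := trace_conj g x
  have hL7 := trace_pow_mul h2 x y hty htxy
  -- involutions and commutation
  set c : ℕ → SL28 := fun k => x ^ k * y * (x ^ k)⁻¹ with hcdef
  have hc2 : ∀ k, c k * c k = 1 := by
    intro k
    have h : c k * c k = x ^ k * (y * y) * (x ^ k)⁻¹ := by simp only [hcdef]; group
    rw [h, hy2]
    group
  have hw : ∀ m : ℕ, (y * x ^ m * y * (x ^ m)⁻¹) * (y * x ^ m * y * (x ^ m)⁻¹) = 1 :=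
    fun m => trace_comm_zero h2 (x ^ m) y hy2 (hL7 m)
  have hcomm : ∀ j k, c j * c k = c k * c j := by
    have hs : ∀ j m, c j * c (j + m) = c (j + m) * c j := by
      intro j m
      have hform : c j * c (j + m) = x ^ j * (y * x ^ m * y * (x ^ m)⁻¹) * (x ^ j)⁻¹ := by
        simp only [hcdef, pow_add]
        group
      have key : (c j * c (j + m)) * (c j * c (j + m)) = 1 := by
        rw [hform]
        have h : (x ^ j * (y * x ^ m * y * (x ^ m)⁻¹) * (x ^ j)⁻¹) *
            (x ^ j * (y * x ^ m * y * (x ^ m)⁻¹) * (x ^ j)⁻¹) =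
            x ^ j * ((y * x ^ m * y * (x ^ m)⁻¹) * (y * x ^ m * y * (x ^ m)⁻¹)) * (x ^ j)⁻¹ := by
          group
        rw [h, hw m]
        group
      have hj : (c j)⁻¹ = c j := inv_eq_of_mul_eq_one_right (hc2 j)
      have hk : (c (j + m))⁻¹ = c (j + m) := inv_eq_of_mul_eq_one_right (hc2 (j + m))
      calc c j * c (j + m) = (c j * c (j + m))⁻¹ := (inv_eq_of_mul_eq_one_right key).symm
        _ = (c (j + m))⁻¹ * (c j)⁻¹ := mul_inv_rev _ _
        _ = c (j + m) * c j := by rw [hj, hk]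
    intro j k
    rcases le_total j k with h | h
    · obtain ⟨m, rfl⟩ := Nat.exists_eq_add_of_le h
      exact hs j m
    · obtain ⟨m, rfl⟩ := Nat.exists_eq_add_of_le h
      exact (hs k m).symm
  set C : Set SL28 := Set.range c with hCdef
  set V : Subgroup SL28 := Subgroup.closure C with hVdef
  have hCV : C ⊆ V := Subgroup.subset_closure
  have hVcent : V ≤ Subgroup.centralizer C := by
    rw [hVdef, Subgroup.closure_le]
    rintro a ⟨i, rfl⟩
    rw [SetLike.mem_coe, Subgroup.mem_centralizer_iff]
    rintro h ⟨j, rfl⟩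
    exact hcomm j i
  have hVcomm : ∀ v ∈ V, ∀ w ∈ V, v * w = w * v := by
    have hle : V ≤ Subgroup.centralizer (V : Set SL28) := by
      rw [hVdef, Subgroup.closure_le]
      rintro a ⟨i, rfl⟩
      rw [SetLike.mem_coe, Subgroup.mem_centralizer_iff]
      intro h hh
      have := Subgroup.mem_centralizer_iff.mp (hVcent hh) (c i) ⟨i, rfl⟩
      exact this.symm
    intro v hv w hw
    exact Subgroup.mem_centralizer_iff.mp (hle hw) v hv
  have hVsq : ∀ v ∈ V, v * v = 1 := by
    intro v hv
    induction hv using Subgroup.closure_induction with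
    | mem g hg =>
      obtain ⟨k, rfl⟩ := hg
      exact hc2 k
    | one => simp
    | mul a b ha hb pa pb =>
      have hab : b * a = a * b := hVcomm b hb a ha
      calc a * b * (a * b) = a * (b * a) * b := by group
        _ = a * (a * b) * b := by rw [hab]
        _ = (a * a) * (b * b) := by group
        _ = 1 := by rw [pa, pb, one_mul]
    | inv a ha pa =>
      calc a⁻¹ * a⁻¹ = (a * a)⁻¹ := by group
        _ = 1 := by rw [pa, inv_one]
  have hxc : ∀ k, x * c k * x⁻¹ = c (k + 1) := by
    intro k
    simp only [hcdef, pow_succ]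
    group
  have hxc' : ∀ k, x⁻¹ * c k * x = c (k + 6) := by
    intro k
    have hp : x ^ (k + 6) = x⁻¹ * x ^ k := by
      have h7 : x ^ (k + 7) = x ^ k := by rw [pow_add, hx7, mul_one]
      calc x ^ (k + 6) = x⁻¹ * x ^ (k + 7) := by rw [show k + 7 = (k + 6) + 1 from rfl, pow_succ]; group
        _ = x⁻¹ * x ^ k := by rw [h7]
    simp only [hcdef]
    rw [hp]
    group
  have hxn : x ∈ Subgroup.normalizer (V : Set SL28) := by
    have h1 : ∀ v ∈ V, x * v * x⁻¹ ∈ V := by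
      intro v hv
      induction hv using Subgroup.closure_induction with
      | mem g hg =>
        obtain ⟨k, rfl⟩ := hg
        rw [hxc k]
        exact hCV ⟨k + 1, rfl⟩
      | one => simpa using one_mem V
      | mul a b ha hb pa pb =>
        have h : x * (a * b) * x⁻¹ = (x * a * x⁻¹) * (x * b * x⁻¹) := by group
        rw [h]; exact mul_mem pa pb
      | inv a ha pa =>
        have h : x * a⁻¹ * x⁻¹ = (x * a * x⁻¹)⁻¹ := by group
        rw [h]; exact inv_mem pa
    have h1' : ∀ v ∈ V, x⁻¹ * v * x ∈ V := by
      intro v hv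
      induction hv using Subgroup.closure_induction with
      | mem g hg =>
        obtain ⟨k, rfl⟩ := hg
        rw [hxc' k]
        exact hCV ⟨k + 6, rfl⟩
      | one => simpa using one_mem V
      | mul a b ha hb pa pb =>
        have h : x⁻¹ * (a * b) * x = (x⁻¹ * a * x) * (x⁻¹ * b * x) := by group
        rw [h]; exact mul_mem pa pb
      | inv a ha pa =>
        have h : x⁻¹ * a⁻¹ * x = (x⁻¹ * a * x)⁻¹ := by group
        rw [h]; exact inv_mem pa
    rw [Subgroup.mem_normalizer_iff]
    intro h
    constructor
    · intro hh
      exact h1 h hh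
    · intro hh
      have hres := h1' _ hh
      have he : x⁻¹ * (x * h * x⁻¹) * x = h := by group
      rwa [he] at hres
  -- the subgroup S = ⟨x⟩ * V
  let S : Subgroup SL28 :=
    { carrier := {g | ∃ a ∈ Subgroup.zpowers x, ∃ v ∈ V, g = a * v}
      one_mem' := ⟨1, one_mem _, 1, one_mem _, (one_mul 1).symm⟩
      mul_mem' := by
        rintro g h ⟨a, ha, v, hv, rfl⟩ ⟨b, hb, w, hw, rfl⟩
        refine ⟨a * b, mul_mem ha hb, (b⁻¹ * v * b) * w, mul_mem ?_ hw, by group⟩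
        have hbn : b ∈ Subgroup.normalizer (V : Set SL28) := Subgroup.zpowers_le.mpr hxn hb
        exact (Subgroup.mem_normalizer_iff''.mp hbn v).mp hv
      inv_mem' := by
        rintro g ⟨a, ha, v, hv, rfl⟩
        refine ⟨a⁻¹, inv_mem ha, a * v⁻¹ * a⁻¹, ?_, by group⟩
        have han : a ∈ Subgroup.normalizer (V : Set SL28) := Subgroup.zpowers_le.mpr hxn ha
        exact (Subgroup.mem_normalizer_iff.mp han v⁻¹).mp (inv_mem hv) }
  have hHS : Subgroup.closure ({x, y} : Set SL28) ≤ S := by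
    rw [Subgroup.closure_le]
    intro g hg
    simp only [Set.mem_insert_iff, Set.mem_singleton_iff] at hg
    rcases hg with rfl | rfl
    · exact ⟨g, Subgroup.mem_zpowers g, 1, one_mem _, (mul_one g).symm⟩
    · refine ⟨1, one_mem _, g, hCV ⟨0, ?_⟩, (one_mul g).symm⟩
      simp [hcdef]
  -- V is an elementary abelian 2-group
  have hV2 : IsPGroup 2 V := by
    intro v
    refine ⟨1, ?_⟩
    have hvv : (v : SL28) * v = 1 := hVsq v v.2
    apply Subtype.ext
    have hcast : ((v ^ 2 ^ 1 : ↥V) : SL28) = (v : SL28) ^ 2 ^ 1 := by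
      push_cast
      rfl
    rw [hcast, pow_one, pow_two, hvv]
    rfl
  obtain ⟨n, hn⟩ := IsPGroup.iff_card.mp hV2
  -- cardinality bounds
  have hGL : Nat.card (GL (Fin 2) (GaloisField 2 3)) = 3528 := by
    haveI : Fintype (GaloisField 2 3) := Fintype.ofFinite _
    have hcard : Fintype.card (GaloisField 2 3) = 8 := by
      rw [← Nat.card_eq_fintype_card]
      exact GaloisField.card 2 3 (by norm_num)
    rw [Matrix.card_GL_field, hcard]
    simp [Fin.prod_univ_two]
  have hdvdGL : Nat.card SL28 ∣ 3528 := by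
    rw [← hGL]
    have hinj : Function.Injective
        (Matrix.SpecialLinearGroup.toGL :
          SL28 →* GL (Fin 2) (GaloisField 2 3)) :=
      fun A B h => Subtype.ext (congrArg Units.val h)
    have hcongr : Nat.card SL28 =
        Nat.card (Matrix.SpecialLinearGroup.toGL
          (n := Fin 2) (R := GaloisField 2 3)).range :=
      Nat.card_congr (MonoidHom.ofInjective hinj).toEquiv
    rw [hcongr]
    exact Subgroup.card_subgroup_dvd_card _
  have h2n : (2 : ℕ) ^ n ≤ 8 := by
    have hd : (2 : ℕ) ^ n ∣ 3528 := by
      rw [← hn]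
      exact (Subgroup.card_subgroup_dvd_card V).trans hdvdGL
    have h8 : (2 : ℕ) ^ n ∣ 8 * 441 := by
      have : (3528 : ℕ) = 8 * 441 := by norm_num
      rwa [this] at hd
    have hcop : Nat.Coprime (2 ^ n) 441 := Nat.Coprime.pow_left n (by norm_num)
    exact Nat.le_of_dvd (by norm_num) (hcop.dvd_of_dvd_mul_right h8)
  have hcardV : Nat.card V ≤ 8 := by rw [hn]; exact h2n
  have hzp : Nat.card (Subgroup.zpowers x) = 7 := by rw [Nat.card_zpowers, hx]
  have hcardS : Nat.card S ≤ 56 := by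
    have hsurj : Function.Surjective (fun p : (Subgroup.zpowers x) × V =>
        (⟨(p.1 : SL28) * (p.2 : SL28), ⟨p.1, p.1.2, p.2, p.2.2, rfl⟩⟩ : S)) := by
      rintro ⟨g, a, ha, v, hv, rfl⟩
      exact ⟨(⟨a, ha⟩, ⟨v, hv⟩), rfl⟩
    have hle := Nat.card_le_card_of_surjective _ hsurj
    rw [Nat.card_prod, hzp] at hle
    omega
  have hcardG : 64 ≤ Nat.card SL28 := by
    have hinj : Function.Injective (fun p : (GaloisField 2 3) × (GaloisField 2 3) =>
        (⟨!![1, p.1; p.2, p.2 * p.1 + 1], by rw [det_fin_two_of]; ring⟩ : SL28)) := by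
      rintro ⟨b, c⟩ ⟨b', c'⟩ h
      have hm := congrArg (fun A : SL28 => (A : Matrix (Fin 2) (Fin 2) (GaloisField 2 3))) h
      simp only at hm
      have h01 := congrFun (congrFun hm 0) 1
      have h10 := congrFun (congrFun hm 1) 0
      simp at h01 h10
      simp [Prod.ext_iff]
      exact ⟨h01, h10⟩
    have hle := Nat.card_le_card_of_injective _ hinj
    rw [Nat.card_prod, GaloisField.card 2 3 (by norm_num)] at hle
    calc (64 : ℕ) = 2 ^ 3 * 2 ^ 3 := by norm_num
      _ ≤ Nat.card SL28 := hle
  intro htop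
  have hfinal : Nat.card SL28 ≤ 56 := by
    calc Nat.card SL28 = Nat.card (⊤ : Subgroup SL28) := Subgroup.card_top.symm
      _ = Nat.card (Subgroup.closure ({x, y} : Set SL28)) := by rw [htop]
      _ ≤ Nat.card S := Subgroup.card_le_of_le hHS
      _ ≤ 56 := hcardS
  have hcontra : (64 : ℕ) ≤ 56 := le_trans hcardG hfinal
  exact absurd hcontra (by norm_num)
end

section
/- For every n ≥ 5 and every permutation y in the symmetric group Sₙ = Equiv.Perm (Fin n) with y ≠ 1 and y² = 1, there exists a permutation x such that the subgroup generated by {x, y} is all of Sₙ. (Every involution in Sₙ, n ≥ 5, is a member of a generating pair.) -/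
open Equiv Equiv.Perm Subgroup Finset

/-- If a subgroup contains `C`, `swap a d` with `C a = d`, then it contains all
swaps `swap a ((C ^ j) a)`. -/
private lemma swap_chain_mem {α : Type*} [DecidableEq α] {H : Subgroup (Perm α)} {C : Perm α}
    {a d : α} (hC : C ∈ H) (had : Equiv.swap a d ∈ H) (hCa : C a = d) :
    ∀ j : ℕ, Equiv.swap a ((C ^ j) a) ∈ H := by
  intro j
  induction j with
  | zero =>
    have h : Equiv.swap a ((C ^ 0) a) = 1 := by
      rw [pow_zero]
      simp [Equiv.swap_self, Equiv.Perm.one_def]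
    rw [h]; exact H.one_mem
  | succ j ih =>
    have hmem : Equiv.swap ((C ^ j) a) ((C ^ j) d) ∈ H := by
      rw [Equiv.swap_apply_apply]
      exact H.mul_mem (H.mul_mem (H.pow_mem hC j) had) (H.inv_mem (H.pow_mem hC j))
    have hrw : (C ^ j) d = (C ^ (j + 1)) a := by
      rw [← hCa, pow_succ, Equiv.Perm.mul_apply]
    rw [hrw] at hmem
    exact SubmonoidClass.swap_mem_trans H ih hmem

/-- From `τ * C * y ∈ H`, `y ∈ H`, where `τ` is an involution commuting with `C` and the
order of `C` is odd, extract `τ ∈ H` and `C ∈ H`. -/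
private lemma tau_C_mem {α : Type*} [DecidableEq α] {H : Subgroup (Perm α)} {y τ C : Perm α}
    (hx : τ * C * y ∈ H) (hy : y ∈ H) (hyy : y * y = 1)
    (hcomm : Commute τ C) (hττ : τ * τ = 1) (hodd : Odd (orderOf C)) :
    τ ∈ H ∧ C ∈ H := by
  have hw : τ * C ∈ H := by
    have h := H.mul_mem hx hy
    rwa [mul_assoc, hyy, mul_one] at h
  obtain ⟨k, hk⟩ := hodd
  have hτ2 : τ ^ 2 = 1 := by rw [sq]; exact hττ
  have hτpow : (τ * C) ^ orderOf C = τ := by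
    rw [hcomm.mul_pow, pow_orderOf_eq_one, mul_one, hk, pow_add, pow_mul, hτ2, one_pow,
      one_mul, pow_one]
  have hτ : τ ∈ H := by
    rw [← hτpow]; exact H.pow_mem hw _
  refine ⟨hτ, ?_⟩
  have h : τ * (τ * C) = C := by rw [← mul_assoc, hττ, one_mul]
  rw [← h]; exact H.mul_mem hτ hw

/-- Endgame : from a star of swaps at `a` (avoiding `b`, `c`), the swap `swap b c`, and the
involution `y` with `y a = b`, all of whose data avoids a point `e`, the subgroup is everything. -/
private lemma endgame {α : Type*} [Fintype α] [DecidableEq α] {H : Subgroup (Perm α)}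
    {y : Perm α} (hyH : y ∈ H)
    {a b c e : α} (hya : y a = b) (hbc : Equiv.swap b c ∈ H)
    (hstar : ∀ v : α, v ≠ a → v ≠ b → v ≠ c → Equiv.swap a v ∈ H)
    (hea : e ≠ a) (heb : e ≠ b) (hec : e ≠ c)
    (hyea : y e ≠ a) (hyeb : y e ≠ b) (hyec : y e ≠ c) :
    H = ⊤ := by
  have hae : Equiv.swap a e ∈ H := hstar e hea heb hec
  have h1 : Equiv.swap b (y e) ∈ H := by
    have h := Equiv.swap_apply_apply y a e
    rw [hya] at h
    rw [h]
    exact H.mul_mem (H.mul_mem hyH hae) (H.inv_mem hyH)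
  have h2 : Equiv.swap a (y e) ∈ H := hstar _ hyea hyeb hyec
  have hab : Equiv.swap a b ∈ H := by
    refine SubmonoidClass.swap_mem_trans H h2 ?_
    rw [Equiv.swap_comm]; exact h1
  have hac : Equiv.swap a c ∈ H := SubmonoidClass.swap_mem_trans H hab hbc
  have hstar' : ∀ w : α, Equiv.swap a w ∈ H := by
    intro w
    by_cases hw : w = a
    · rw [hw]
      have h : Equiv.swap a a = (1 : Perm α) := by
        simp [Equiv.swap_self, Equiv.Perm.one_def]
      rw [h]; exact H.one_mem
    by_cases hwb : w = b
    · rw [hwb]; exact hab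
    by_cases hwc : w = c
    · rw [hwc]; exact hac
    exact hstar w hw hwb hwc
  rw [eq_top_iff, ← Equiv.Perm.closure_isSwap, Subgroup.closure_le]
  rintro σ ⟨u, v, -, rfl⟩
  have hu : Equiv.swap u a ∈ H := by rw [Equiv.swap_comm]; exact hstar' u
  exact SubmonoidClass.swap_mem_trans H hu (hstar' v)

/-- Every involution in `Sₙ`, `n ≥ 5`, is a member of a generating pair. -/
theorem symmetricGroup_involution_useful (n : ℕ) (hn : 5 ≤ n)
    (y : Equiv.Perm (Fin n)) (hy1 : y ≠ 1) (hy2 : y ^ 2 = 1) :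
    ∃ x : Equiv.Perm (Fin n),
      Subgroup.closure ({x, y} : Set (Equiv.Perm (Fin n))) = ⊤ := by
  classical
  have hyy : y * y = 1 := by rwa [← sq]
  have hyinv : ∀ t, y (y t) = t := by
    intro t
    rw [← Equiv.Perm.mul_apply, hyy, Equiv.Perm.one_apply]
  obtain ⟨a, ha⟩ : ∃ a, y a ≠ a := by
    by_contra h
    push_neg at h
    exact hy1 (Equiv.ext fun t => by simp [h t])
  set b := y a with hb
  have hyb : y b = a := by rw [hb]; exact hyinv a
  have hab : a ≠ b := Ne.symm ha
  by_cases hc : ∃ c, y c ≠ c ∧ c ≠ a ∧ c ≠ b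
  · -- main case : `y` moves at least two pairs
    obtain ⟨c, hcc, hca, hcb⟩ := hc
    set d := y c with hd
    have hydc : y d = c := by rw [hd]; exact hyinv c
    have hdc : d ≠ c := hcc
    have hcd : c ≠ d := hdc.symm
    have hda : d ≠ a := fun h => hcb (by rw [← hydc, h, ← hb])
    have hdb : d ≠ b := fun h => hca (by rw [← hydc, h, hyb])
    set E : Finset (Fin n) := univ \ ({a, b, c, d} : Finset (Fin n)) with hE
    have hcard4 : ({a, b, c, d} : Finset (Fin n)).card = 4 := by
      rw [card_insert_of_notMem (by simp [hab, hca.symm, hda.symm]),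
        card_insert_of_notMem (by simp [hcb.symm, hdb.symm]),
        card_insert_of_notMem (by simp [hcd]), card_singleton]
    have hEcard : E.card = n - 4 := by
      rw [hE, card_sdiff_of_subset (subset_univ _), hcard4, card_univ, Fintype.card_fin]
    have hmemE : ∀ t : Fin n, t ∈ E ↔ t ≠ a ∧ t ≠ b ∧ t ≠ c ∧ t ≠ d := by
      intro t
      simp only [hE, Finset.mem_sdiff, Finset.mem_univ, true_and, Finset.mem_insert,
        Finset.mem_singleton]
      push_neg
      rfl
    obtain ⟨e, he⟩ : E.Nonempty := Finset.card_pos.mp (by omega)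
    rw [hmemE] at he
    obtain ⟨hea, heb, hec, hed⟩ := he
    have hyea : y e ≠ a := fun h => heb (by rw [← hyinv e, h, ← hb])
    have hyeb : y e ≠ b := fun h => hea (by rw [← hyinv e, h, hyb])
    have hyec : y e ≠ c := fun h => hed (by rw [← hyinv e, h, ← hd])
    rcases Nat.even_or_odd n with hpar | hpar
    · -- `n` even : take `C` a cycle on the complement of `{a, b, c}` (odd length `n - 3`)
      set L : List (Fin n) := d :: E.toList with hL
      have hnd : L.Nodup := by
        rw [hL, List.nodup_cons]
        refine ⟨?_, Finset.nodup_toList E⟩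
        rw [Finset.mem_toList, hmemE]
        simp
      have hlen : L.length = n - 3 := by
        rw [hL, List.length_cons, Finset.length_toList, hEcard]
        omega
      set C : Perm (Fin n) := L.formPerm with hC
      have hlen2 : 2 ≤ L.length := by omega
      have hcyc : C.IsCycle := List.isCycle_formPerm hnd hlen2
      have hne_single : ∀ z : Fin n, L ≠ [z] := by
        intro z hz
        have h1 := congrArg List.length hz
        rw [hlen] at h1
        simp at h1
        omega
      have hsupp : C.support = univ \ ({a, b, c} : Finset (Fin n)) := by
        rw [hC, List.support_formPerm_of_nodup L hnd hne_single]
        ext t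
        rw [hL, List.toFinset_cons, Finset.mem_insert, Finset.toList_toFinset, hmemE]
        simp only [Finset.mem_sdiff, Finset.mem_univ, true_and, Finset.mem_insert,
          Finset.mem_singleton]
        push_neg
        constructor
        · rintro (rfl | ⟨h1, h2, h3, h4⟩)
          · exact ⟨hda, hdb, hdc⟩
          · exact ⟨h1, h2, h3⟩
        · rintro ⟨h1, h2, h3⟩
          by_cases htd : t = d
          · exact Or.inl htd
          · exact Or.inr ⟨h1, h2, h3, htd⟩
      have horder : Odd (orderOf C) := by
        rw [hcyc.orderOf, hC, List.support_formPerm_of_nodup L hnd hne_single,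
          List.toFinset_card_of_nodup hnd, hlen]
        exact Nat.Even.sub_odd (by omega) hpar (by decide)
      have hdisj : Equiv.Perm.Disjoint (Equiv.swap b c) C := by
        intro t
        rcases eq_or_ne (C t) t with h | h
        · exact Or.inr h
        · left
          have ht : t ∈ C.support := Equiv.Perm.mem_support.mpr h
          rw [hsupp] at ht
          simp only [Finset.mem_sdiff, Finset.mem_univ, true_and, Finset.mem_insert,
            Finset.mem_singleton] at ht
          push_neg at ht
          exact Equiv.swap_apply_of_ne_of_ne ht.2.1 ht.2.2
      refine ⟨Equiv.swap b c * C * y, ?_⟩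
      set H : Subgroup (Perm (Fin n)) :=
        Subgroup.closure ({Equiv.swap b c * C * y, y} : Set (Perm (Fin n))) with hH
      have hxH : Equiv.swap b c * C * y ∈ H := subset_closure (Set.mem_insert _ _)
      have hyH : y ∈ H := subset_closure (Set.mem_insert_of_mem _ rfl)
      obtain ⟨hτH, hCH⟩ := tau_C_mem hxH hyH hyy hdisj.commute (Equiv.swap_mul_self b c) horder
      have had : Equiv.swap a d ∈ H := by
        have h := Equiv.swap_apply_apply y b c
        rw [hyb, ← hd] at h
        rw [h]
        exact H.mul_mem (H.mul_mem hyH hτH) (H.inv_mem hyH)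
      have hCaa : C a = a := by
        apply List.formPerm_apply_of_notMem
        rw [hL, List.mem_cons, Finset.mem_toList, hmemE]
        simp [hda.symm]
      have hstar : ∀ v : Fin n, v ≠ a → v ≠ b → v ≠ c → Equiv.swap a v ∈ H := by
        intro v hva hvb hvc
        have hvs : v ∈ C.support := by rw [hsupp]; simp [hva, hvb, hvc]
        have hds : d ∈ C.support := by rw [hsupp]; simp [hda, hdb, hdc]
        have hsc : C.SameCycle d v :=
          hcyc.sameCycle (Equiv.Perm.mem_support.mp hds) (Equiv.Perm.mem_support.mp hvs)
        obtain ⟨i, -, hi⟩ := hsc.exists_pow_eq'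
        have h : Equiv.swap a v = (C ^ i) * Equiv.swap a d * (C ^ i)⁻¹ := by
          rw [← Equiv.swap_apply_apply,
            Equiv.Perm.pow_apply_eq_self_of_apply_eq_self hCaa, hi]
        rw [h]
        exact H.mul_mem (H.mul_mem (H.pow_mem hCH i) had) (H.inv_mem (H.pow_mem hCH i))
      exact endgame hyH hb.symm hτH hstar hea heb hec hyea hyeb hyec
    · -- `n` odd : take `C` a cycle on the complement of `{b, c}` (odd length `n - 2`),
      -- sending `a` to `d`
      set L : List (Fin n) := a :: d :: E.toList with hL
      have hnd : L.Nodup := by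
        rw [hL, List.nodup_cons, List.nodup_cons]
        refine ⟨?_, ?_, Finset.nodup_toList E⟩
        · rw [List.mem_cons, Finset.mem_toList, hmemE]
          simp [hda.symm]
        · rw [Finset.mem_toList, hmemE]
          simp
      have hlen : L.length = n - 2 := by
        rw [hL, List.length_cons, List.length_cons, Finset.length_toList, hEcard]
        omega
      set C : Perm (Fin n) := L.formPerm with hC
      have hlen2 : 2 ≤ L.length := by omega
      have hcyc : C.IsCycle := List.isCycle_formPerm hnd hlen2
      have hne_single : ∀ z : Fin n, L ≠ [z] := by
        intro z hz
        have h1 := congrArg List.length hz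
        rw [hlen] at h1
        simp at h1
        omega
      have hsupp : C.support = univ \ ({b, c} : Finset (Fin n)) := by
        rw [hC, List.support_formPerm_of_nodup L hnd hne_single]
        ext t
        rw [hL, List.toFinset_cons, Finset.mem_insert, List.toFinset_cons, Finset.mem_insert,
          Finset.toList_toFinset, hmemE]
        simp only [Finset.mem_sdiff, Finset.mem_univ, true_and, Finset.mem_insert,
          Finset.mem_singleton]
        push_neg
        constructor
        · rintro (rfl | rfl | ⟨h1, h2, h3, h4⟩)
          · exact ⟨hab, hca.symm⟩
          · exact ⟨hdb, hdc⟩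
          · exact ⟨h2, h3⟩
        · rintro ⟨h1, h2⟩
          by_cases hta : t = a
          · exact Or.inl hta
          by_cases htd : t = d
          · exact Or.inr (Or.inl htd)
          · exact Or.inr (Or.inr ⟨hta, h1, h2, htd⟩)
      have horder : Odd (orderOf C) := by
        rw [hcyc.orderOf, hC, List.support_formPerm_of_nodup L hnd hne_single,
          List.toFinset_card_of_nodup hnd, hlen]
        exact Nat.Odd.sub_even (by omega) hpar (by decide)
      have hdisj : Equiv.Perm.Disjoint (Equiv.swap b c) C := by
        intro t
        rcases eq_or_ne (C t) t with h | h
        · exact Or.inr h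
        · left
          have ht : t ∈ C.support := Equiv.Perm.mem_support.mpr h
          rw [hsupp] at ht
          simp only [Finset.mem_sdiff, Finset.mem_univ, true_and, Finset.mem_insert,
            Finset.mem_singleton] at ht
          push_neg at ht
          exact Equiv.swap_apply_of_ne_of_ne ht.1 ht.2
      refine ⟨Equiv.swap b c * C * y, ?_⟩
      set H : Subgroup (Perm (Fin n)) :=
        Subgroup.closure ({Equiv.swap b c * C * y, y} : Set (Perm (Fin n))) with hH
      have hxH : Equiv.swap b c * C * y ∈ H := subset_closure (Set.mem_insert _ _)
      have hyH : y ∈ H := subset_closure (Set.mem_insert_of_mem _ rfl)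
      obtain ⟨hτH, hCH⟩ := tau_C_mem hxH hyH hyy hdisj.commute (Equiv.swap_mul_self b c) horder
      have had : Equiv.swap a d ∈ H := by
        have h := Equiv.swap_apply_apply y b c
        rw [hyb, ← hd] at h
        rw [h]
        exact H.mul_mem (H.mul_mem hyH hτH) (H.inv_mem hyH)
      have hCa : C a = d := by
        rw [hC, hL]
        exact List.formPerm_apply_head a d _ hnd
      have hstar : ∀ v : Fin n, v ≠ a → v ≠ b → v ≠ c → Equiv.swap a v ∈ H := by
        intro v _ hvb hvc
        have hvs : v ∈ C.support := by rw [hsupp]; simp [hvb, hvc]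
        have has : a ∈ C.support := by rw [hsupp]; simp [hab, hca.symm]
        have hsc : C.SameCycle a v :=
          hcyc.sameCycle (Equiv.Perm.mem_support.mp has) (Equiv.Perm.mem_support.mp hvs)
        obtain ⟨i, -, hi⟩ := hsc.exists_pow_eq'
        rw [← hi]
        exact swap_chain_mem hCH had hCa i
      exact endgame hyH hb.symm hτH hstar hea heb hec hyea hyeb hyec
  · -- `y` is a single transposition `swap a b` : use a full cycle starting `a, b`
    push_neg at hc
    have hy_eq : y = Equiv.swap a b := by
      refine Equiv.ext fun t => ?_
      rcases eq_or_ne t a with rfl | hta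
      · rw [Equiv.swap_apply_left, ← hb]
      rcases eq_or_ne t b with rfl | htb
      · rw [Equiv.swap_apply_right, hyb]
      · rw [Equiv.swap_apply_of_ne_of_ne hta htb]
        by_contra hyt
        exact htb (hc t hyt hta)
    set L : List (Fin n) := a :: b :: (univ \ ({a, b} : Finset (Fin n))).toList with hL
    have hnd : L.Nodup := by
      rw [hL, List.nodup_cons, List.nodup_cons]
      refine ⟨?_, ?_, Finset.nodup_toList _⟩
      · rw [List.mem_cons, Finset.mem_toList]
        simp [hab]
      · rw [Finset.mem_toList]
        simp
    have hcard2 : ({a, b} : Finset (Fin n)).card = 2 := by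
      rw [card_insert_of_notMem (by simp [hab]), card_singleton]
    have hlen : L.length = n := by
      rw [hL, List.length_cons, List.length_cons, Finset.length_toList,
        card_sdiff_of_subset (subset_univ _), hcard2, card_univ, Fintype.card_fin]
      omega
    set x : Perm (Fin n) := L.formPerm with hx
    have hcyc : x.IsCycle := List.isCycle_formPerm hnd (by omega)
    have hne_single : ∀ z : Fin n, L ≠ [z] := by
      intro z hz
      have h1 := congrArg List.length hz
      rw [hlen] at h1
      simp at h1
      omega
    have hsupp : x.support = univ := by
      rw [hx, List.support_formPerm_of_nodup L hnd hne_single]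
      ext t
      rw [hL, List.toFinset_cons, Finset.mem_insert, List.toFinset_cons, Finset.mem_insert,
        Finset.toList_toFinset]
      simp only [Finset.mem_sdiff, Finset.mem_univ, true_and, Finset.mem_insert,
        Finset.mem_singleton, iff_true]
      by_cases hta : t = a
      · exact Or.inl hta
      by_cases htb : t = b
      · exact Or.inr (Or.inl htb)
      · exact Or.inr (Or.inr (by push_neg; exact ⟨hta, htb⟩))
    have hxa : x a = b := by
      rw [hx, hL]
      exact List.formPerm_apply_head a b _ hnd
    refine ⟨x, ?_⟩
    have h := Equiv.Perm.closure_cycle_adjacent_swap hcyc hsupp a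
    rw [hxa, ← hy_eq] at h
    exact h
end

section
/- Let e ≥ 2, q = 2^e, F = GaloisField 2 e, and let G be the one-dimensional affine group AGL₁(q), realized as the group of affine self-equivalences F ≃ᵃ[F] F (the transformations t ↦ a·t + b with a ∈ Fˣ, b ∈ F). Then every generating pair (x,y) of G with orderOf y = 2 satisfies orderOf x = q − 1, orderOf (x*y) = q − 1, and the commutator x⁻¹ * y⁻¹ * x * y has order 2. (All maps in O(AGL₁(2^e)) have type {q−1, q−1} and Petrie length 4.) -/
open Subgroup

section AGL
variable {F : Type*} [Field F]

/-- The linear-part homomorphism `(F ≃ᵃ[F] F) →* Fˣ`. -/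
noncomputable def aglProj : (F ≃ᵃ[F] F) →* Fˣ :=
  MonoidHom.comp
    { toFun := fun g : F ≃ₗ[F] F => Units.mk0 (g 1)
        (fun h => one_ne_zero (g.injective (by simp [h])))
      map_one' := by ext; simp
      map_mul' := fun g g' => by
        ext
        simp only [Units.val_mul, Units.val_mk0]
        show g (g' 1) = g 1 * g' 1
        calc g (g' 1) = g (g' 1 • (1:F)) := by simp
        _ = g' 1 • g 1 := by rw [map_smul]
        _ = g' 1 * g 1 := rfl
        _ = g 1 * g' 1 := mul_comm _ _ }
    AffineEquiv.linearHom

lemma aglProj_apply (f : F ≃ᵃ[F] F) : (aglProj f : F) = f.linear 1 := rfl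

lemma agl_apply (f : F ≃ᵃ[F] F) (t : F) : f t = f.linear 1 * t + f 0 := by
  have h := congrFun f.toAffineMap.decomp t
  simp only [Pi.add_apply] at h
  have : f.linear t = t • f.linear 1 := by
    conv_lhs => rw [show t = t • (1:F) from (smul_eq_mul t (1:F)).symm ▸ (mul_one t).symm]
    rw [map_smul]
  calc f t = f.toAffineMap t := rfl
  _ = f.linear t + f 0 := h
  _ = f.linear 1 * t + f 0 := by rw [this, smul_eq_mul, mul_comm]

lemma agl_orderOf (f : F ≃ᵃ[F] F) (hf : f.linear 1 ≠ 1) :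
    orderOf f = orderOf (aglProj f) := by
  apply orderOf_eq_orderOf_iff.mpr
  intro n
  constructor
  · intro h; rw [← map_pow, h, map_one]
  · intro h
    have ha : (f.linear 1) ^ n = 1 := by
      have h2 := congrArg Units.val h
      simpa [aglProj_apply] using h2
    set a := f.linear 1 with hadef
    have hsub : (1 : F) - a ≠ 0 := sub_ne_zero.mpr (Ne.symm hf)
    set t0 : F := (1 - a)⁻¹ * f 0 with ht0
    have hfix : f t0 = t0 := by
      rw [agl_apply, ht0]; field_simp; ring
    have hfixn : ∀ k, (f ^ k) t0 = t0 := by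
      intro k
      induction k with
      | zero => simp
      | succ m ih =>
        rw [pow_succ]
        show (f ^ m) (f t0) = t0
        rw [hfix, ih]
    have hlin : (f ^ n).linear 1 = 1 := by
      have h2 := congrArg Units.val (map_pow aglProj f n)
      simp only [aglProj_apply, Units.val_pow_eq_pow_val] at h2
      rw [h2, ← hadef, ha]
    have h0 : (f ^ n) 0 = 0 := by
      have h3 := agl_apply (f ^ n) t0
      rw [hfixn n, hlin, one_mul] at h3
      exact (add_eq_left.mp h3.symm)
    apply AffineEquiv.ext
    intro t
    rw [agl_apply, hlin, h0, one_mul, add_zero]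
    simp

lemma aglProj_surjective : Function.Surjective (aglProj (F := F)) := by
  intro u
  refine ⟨(LinearEquiv.smulOfUnit u).toAffineEquiv, ?_⟩
  ext
  show (LinearEquiv.smulOfUnit u).toAffineEquiv.linear 1 = (u : F)
  show LinearEquiv.smulOfUnit (M := F) u 1 = (u : F)
  show u • (1 : F) = (u : F)
  simp [Units.smul_def]

end AGL

/-- Every generating pair `(x,y)` with `y` an involution of the affine group
`AGL₁(2^e) = (F ≃ᵃ[F] F)`, `F = 𝔽_{2^e}`, `e ≥ 2`, has `x` and `x*y` of order
`2^e - 1` and commutator of order `2`: all maps in `O(AGL₁(2^e))` have type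
`{2^e-1, 2^e-1}` and Petrie length `4`. -/
theorem agl1_map_types (e : ℕ) (he : 2 ≤ e)
    (x y : GaloisField 2 e ≃ᵃ[GaloisField 2 e] GaloisField 2 e)
    (hgen : Subgroup.closure
      ({x, y} : Set (GaloisField 2 e ≃ᵃ[GaloisField 2 e] GaloisField 2 e)) = ⊤)
    (hy : orderOf y = 2) :
    orderOf x = 2 ^ e - 1 ∧ orderOf (x * y) = 2 ^ e - 1 ∧
      orderOf (x⁻¹ * y⁻¹ * x * y) = 2 := by
  set F := GaloisField 2 e
  have hcard : Nat.card F = 2 ^ e := GaloisField.card 2 e (by omega)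
  have hcardu : Nat.card Fˣ = 2 ^ e - 1 := by rw [Nat.card_units, hcard]
  -- y^2 = 1 and y is a translation
  have hy2 : y ^ 2 = 1 := by
    have := pow_orderOf_eq_one y; rwa [hy] at this
  have hπy : aglProj y = 1 := by
    have hu2 : (aglProj y) ^ 2 = 1 := by
      rw [← map_pow, hy2, map_one]
    have hu : ((aglProj y : Fˣ) : F) ^ 2 = 1 := by
      have := congrArg Units.val hu2
      simpa using this
    have hfac : (((aglProj y : Fˣ) : F) - 1) * (((aglProj y : Fˣ) : F) + 1) = 0 := by
      linear_combination hu
    have hval : ((aglProj y : Fˣ) : F) = 1 := by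
      rcases mul_eq_zero.mp hfac with h | h
      · exact sub_eq_zero.mp h
      · have h2 : ((aglProj y : Fˣ) : F) = -1 := eq_neg_of_add_eq_zero_left h
        rw [h2, CharTwo.neg_eq]
    ext
    rw [hval, Units.val_one]
  -- every unit is a power of aglProj x
  have hzp : ∀ u : Fˣ, u ∈ Subgroup.zpowers (aglProj x) := by
    intro u
    obtain ⟨g, rfl⟩ := aglProj_surjective u
    have hg : g ∈ Subgroup.closure ({x, y} : Set (F ≃ᵃ[F] F)) := by
      rw [hgen]; exact Subgroup.mem_top g
    refine Subgroup.closure_induction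
      (p := fun g _ => aglProj g ∈ Subgroup.zpowers (aglProj x)) ?_ ?_ ?_ ?_ hg
    · rintro z (rfl | rfl)
      · exact Subgroup.mem_zpowers _
      · rw [hπy]; exact one_mem _
    · simp only [map_one]; exact one_mem _
    · intro a b _ _ ha hb; simp only [map_mul]; exact mul_mem ha hb
    · intro a _ ha; simp only [map_inv]; exact inv_mem ha
  have hox : orderOf (aglProj x) = 2 ^ e - 1 := by
    rw [orderOf_eq_card_of_forall_mem_zpowers hzp, hcardu]
  have hq3 : 3 ≤ 2 ^ e - 1 := by
    have h4 : (2:ℕ) ^ 2 ≤ 2 ^ e := Nat.pow_le_pow_right (by norm_num) he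
    norm_num at h4
    omega
  have ha1 : x.linear 1 ≠ 1 := by
    intro h
    have : aglProj x = 1 := by ext; simpa [aglProj_apply] using h
    rw [this, orderOf_one] at hox
    omega
  have hx_ord : orderOf x = 2 ^ e - 1 := by rw [agl_orderOf x ha1, hox]
  -- x*y has the same linear part
  have hπxy : aglProj (x * y) = aglProj x := by rw [map_mul, hπy, mul_one]
  have hxy1 : (x * y).linear 1 ≠ 1 := by
    intro h
    apply ha1
    have h2 : ((aglProj (x * y) : Fˣ) : F) = ((aglProj x : Fˣ) : F) := by rw [hπxy]
    rw [aglProj_apply, aglProj_apply] at h2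
    rw [← h2, h]
  have hxy_ord : orderOf (x * y) = 2 ^ e - 1 := by
    rw [agl_orderOf (x * y) hxy1, hπxy, hox]
  refine ⟨hx_ord, hxy_ord, ?_⟩
  -- the commutator
  set w := x⁻¹ * y⁻¹ * x * y with hw
  have hπw : aglProj w = 1 := by
    simp [hw, map_mul, map_inv, hπy]
  have hwlin : w.linear 1 = 1 := by
    have := congrArg Units.val hπw; simpa [aglProj_apply] using this
  have hylin : y.linear 1 = 1 := by
    have := congrArg Units.val hπy; simpa [aglProj_apply] using this
  have hyapp : ∀ t : F, y t = t + y 0 := by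
    intro t; rw [agl_apply, hylin, one_mul]
  have hb : y 0 ≠ 0 := by
    intro h
    have : y = 1 := by
      apply AffineEquiv.ext; intro t; rw [hyapp t, h, add_zero]; simp
    rw [this, orderOf_one] at hy; omega
  have hyinv : y⁻¹ = y := by
    apply inv_eq_of_mul_eq_one_right; rw [← sq, hy2]
  have hw0 : w 0 ≠ 0 := by
    intro h
    have h1 : x⁻¹ (y⁻¹ (x (y 0))) = 0 := h
    have h2 : y⁻¹ (x (y 0)) = x 0 := by
      have := congrArg x h1
      rwa [show x (x⁻¹ (y⁻¹ (x (y 0)))) = y⁻¹ (x (y 0)) from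
        x.apply_symm_apply _] at this
    rw [hyinv] at h2
    rw [hyapp, agl_apply x (y 0), hyapp 0, zero_add] at h2
    -- h2 : x.linear 1 * y 0 + x 0 + y 0 = x 0
    have h3 : (x.linear 1 + 1) * y 0 = 0 := by linear_combination h2
    rcases mul_eq_zero.mp h3 with h4 | h4
    · refine ha1 ?_
      have h5 : x.linear 1 = -1 := eq_neg_of_add_eq_zero_left h4
      rw [h5, CharTwo.neg_eq]
    · exact hb h4
  have hwapp : ∀ t : F, w t = t + w 0 := by
    intro t; rw [agl_apply, hwlin, one_mul]
  have hw2 : w ^ 2 = 1 := by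
    apply AffineEquiv.ext
    intro t
    rw [sq]
    show w (w t) = (1 : F ≃ᵃ[F] F) t
    rw [hwapp, hwapp t, add_assoc, CharTwo.add_self_eq_zero (w 0), add_zero]
    simp
  exact orderOf_eq_prime hw2 (fun h => hw0 (by rw [h]; simp))
end

section
/- Let e ≥ 2, q = 2^e, F = GaloisField 2 e, and let G be the one-dimensional affine group AGL₁(q), realized as the group of affine self-equivalences F ≃ᵃ[F] F. Then the number of generating pairs (x,y) of G with orderOf y = 2 is φ(q−1)·q·(q−1), where φ is Euler's totient function, and the number of Aut-equivalence classes of such pairs is φ(q−1)/e. (There are exactly φ(2^e − 1)/e orientably regular maps with orientation-preserving automorphism group AGL₁(2^e); in particular for e = 2 there is a single such map, the tetrahedron.) -/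
/-- Generating pairs `(x,y)` with `y` of order 2, in any group. -/
def IsMapPair {G : Type} [Group G] (p : G × G) : Prop :=
  Subgroup.closure ({p.1, p.2} : Set G) = ⊤ ∧ orderOf p.2 = 2

/-- Aut-equivalence of pairs satisfying a property `P`. -/
def AutEquivOn {G : Type} [Group G] (P : G × G → Prop)
    (p q : {p : G × G // P p}) : Prop :=
  ∃ α : G ≃* G, α p.1.1 = q.1.1 ∧ α p.1.2 = q.1.2

set_option linter.unusedSectionVars false

namespace AGL
variable {F : Type} [Field F]

/-- `t ↦ a*t + b` as an affine equivalence. -/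
def mk (a : Fˣ) (b : F) : F ≃ᵃ[F] F :=
  ((LinearEquiv.smulOfUnit a).toAffineEquiv).trans (AffineEquiv.constVAdd F F b)

@[simp] theorem mk_apply (a : Fˣ) (b : F) (t : F) : mk a b t = a * t + b := by
  simp [mk, LinearEquiv.smulOfUnit, AffineEquiv.constVAdd, Units.smul_def, smul_eq_mul, add_comm]
  rfl

theorem apply_eq (g : F ≃ᵃ[F] F) (t : F) : g t = (g 1 - g 0) * t + g 0 := by
  have h1 : g t = g.linear t + g 0 := by
    have := g.toAffineMap.map_vadd (0 : F) t
    simpa [vadd_eq_add] using this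
  have h2 : g.linear 1 = g 1 - g 0 := by
    have := g.toAffineMap.linearMap_vsub 1 0
    simpa [vsub_eq_sub] using this
  have h3 : g.linear t = t * g.linear 1 := by
    have := g.linear.map_smul t 1
    simpa [smul_eq_mul] using this
  rw [h1, h3, h2, mul_comm]

theorem unit_ne_zero (g : F ≃ᵃ[F] F) : g 1 - g 0 ≠ 0 := by
  intro h
  have : g 1 = g 0 := sub_eq_zero.mp h
  exact one_ne_zero (g.injective this)

/-- The multiplicative part of `g` as a unit. -/
def ucoef (g : F ≃ᵃ[F] F) : Fˣ := Units.mk0 _ (unit_ne_zero g)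

@[simp] theorem ucoef_coe (g : F ≃ᵃ[F] F) : (ucoef g : F) = g 1 - g 0 := rfl

theorem eq_mk (g : F ≃ᵃ[F] F) : g = mk (ucoef g) (g 0) := by
  ext t
  rw [mk_apply, ucoef_coe, apply_eq g t]

@[simp] theorem mul_apply (g h : F ≃ᵃ[F] F) (t : F) : (g * h) t = g (h t) := rfl

theorem mk_mul (a a' : Fˣ) (b b' : F) :
    mk a b * mk a' b' = mk (a * a') ((a : F) * b' + b) := by
  ext t; simp; ring

@[simp] theorem mk_one : (mk 1 0 : F ≃ᵃ[F] F) = 1 := by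
  ext t; simp [AffineEquiv.one_def]

theorem mk_inv (a : Fˣ) (b : F) : (mk a b)⁻¹ = mk a⁻¹ (-((a⁻¹ : Fˣ) : F) * b) := by
  rw [eq_comm, eq_inv_iff_mul_eq_one, mul_comm, mk_mul, ← mk_one]
  congr 1
  · exact inv_mul_cancel a
  · field_simp; ring

theorem mk_injective2 {a a' : Fˣ} {b b' : F} (h : (mk a b : F ≃ᵃ[F] F) = mk a' b') :
    a = a' ∧ b = b' := by
  have h0 : (mk a b : F ≃ᵃ[F] F) 0 = mk a' b' 0 := by rw [h]
  have h1 : (mk a b : F ≃ᵃ[F] F) 1 = mk a' b' 1 := by rw [h]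
  simp at h0 h1
  refine ⟨Units.ext ?_, h0⟩
  have : (a : F) = a' := by linear_combination h1 - h0
  exact this

@[simp] theorem ucoef_mk (a : Fˣ) (b : F) : ucoef (mk a b : F ≃ᵃ[F] F) = a := by
  ext; simp

@[simp] theorem mk_zero_apply (a : Fˣ) (b : F) : (mk a b : F ≃ᵃ[F] F) 0 = b := by simp



/-- the multiplicative part as a monoid hom -/
def uhom : (F ≃ᵃ[F] F) →* Fˣ where
  toFun := ucoef
  map_one' := by rw [← mk_one, ucoef_mk]
  map_mul' g h := by
    have hgh : g * h = mk (ucoef g * ucoef h) ((ucoef g : F) * h 0 + g 0) := by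
      conv_lhs => rw [eq_mk g, eq_mk h]
      rw [mk_mul]
    show ucoef (g * h) = ucoef g * ucoef h
    rw [hgh, ucoef_mk]

theorem mk_conj (a : Fˣ) (b : F) (c : F) :
    mk a b * mk 1 c * (mk a b)⁻¹ = mk 1 ((a : F) * c) := by
  rw [mk_inv, mk_mul, mk_mul]
  congr 1
  · group
  · field_simp; simp only [mul_one, Units.mul_inv]; ring

theorem ucoef_zpow (x : F ≃ᵃ[F] F) (n : ℤ) : ucoef (x ^ n) = (ucoef x) ^ n :=
  map_zpow uhom x n

section fin
variable [Fintype F] [CharP F 2]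

theorem sq_units_eq_one {a : Fˣ} (h : a ^ 2 = 1) : a = 1 := by
  have h2 : ((a : F) - 1) ^ 2 = 0 := by
    have : (a : F) ^ 2 = 1 := by
      have := congrArg (Units.val) h
      simpa using this
    have h2 : (2 : F) = 0 := by
      simpa using CharP.cast_eq_zero F 2
    ring_nf
    rw [this]
    ring_nf
    linear_combination (1 - (a:F)) * h2
  have := pow_eq_zero_iff (n := 2) (by norm_num) |>.mp h2
  exact Units.ext (by simpa [sub_eq_zero] using this)

theorem orderOf_eq_two_iff (y : F ≃ᵃ[F] F) :
    orderOf y = 2 ↔ ∃ c : F, c ≠ 0 ∧ y = mk 1 c := by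
  constructor
  · intro h
    have hy2 : y ^ 2 = 1 := by rw [← h]; exact pow_orderOf_eq_one y
    have hy1 : y ≠ 1 := by
      intro h1; rw [h1] at h; simp at h
    rw [eq_mk y] at hy2 ⊢
    rw [pow_two, mk_mul] at hy2
    rw [← mk_one] at hy2
    obtain ⟨ha, -⟩ := mk_injective2 hy2
    have ha1 : ucoef y = 1 := sq_units_eq_one (by rw [pow_two]; exact ha)
    refine ⟨y 0, ?_, by rw [ha1]⟩
    intro h0
    exact hy1 (by rw [eq_mk y, ha1, h0, mk_one])
  · rintro ⟨c, hc, rfl⟩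
    have h2 : (2 : F) = 0 := by simpa using CharP.cast_eq_zero F 2
    have hsq : (mk 1 c : F ≃ᵃ[F] F) ^ 2 = 1 := by
      rw [pow_two, mk_mul, ← mk_one]
      congr 1
      · simp
      · show ((1:Fˣ):F) * c + c = 0
        rw [Units.val_one]
        linear_combination c * h2
    refine orderOf_eq_prime hsq ?_
    intro h1
    rw [← mk_one] at h1
    exact hc (mk_injective2 h1).2

/-- Main generation criterion. -/
theorem closure_eq_top_iff {x : F ≃ᵃ[F] F} {c : F} (hc : c ≠ 0) :
    Subgroup.closure ({x, mk 1 c} : Set (F ≃ᵃ[F] F)) = ⊤ ↔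
      orderOf (ucoef x) = Nat.card Fˣ := by
  constructor
  · intro h
    apply orderOf_eq_card_of_forall_mem_zpowers
    intro u
    have hmap : (Subgroup.closure ({x, mk 1 c} : Set (F ≃ᵃ[F] F))).map uhom = ⊤ := by
      rw [h]
      apply Subgroup.map_top_of_surjective
      intro u
      exact ⟨mk u 0, by simp [uhom, ucoef_mk]⟩
    rw [MonoidHom.map_closure] at hmap
    have himg : uhom '' ({x, mk 1 c} : Set (F ≃ᵃ[F] F)) ⊆ {ucoef x, 1} := by
      rintro _ ⟨g, (rfl | rfl), rfl⟩
      · exact Or.inl rfl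
      · right; show uhom _ = 1; simp [uhom, ucoef_mk]
    have h1 : (⊤ : Subgroup Fˣ) ≤ Subgroup.closure {ucoef x, 1} := by
      rw [← hmap]; exact Subgroup.closure_mono himg
    have h2 : Subgroup.closure ({ucoef x, 1} : Set Fˣ) ≤ Subgroup.zpowers (ucoef x) := by
      rw [Subgroup.closure_le]
      rintro _ (rfl | rfl)
      · exact Subgroup.mem_zpowers _
      · exact Subgroup.one_mem _
    exact h2 (h1 (Subgroup.mem_top u))
  · intro h
    set a := ucoef x with ha
    have hgen : ∀ u : Fˣ, u ∈ Subgroup.zpowers a := by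
      intro u
      have : Subgroup.zpowers a = ⊤ := by
        apply Subgroup.eq_top_of_card_eq
        rw [Nat.card_zpowers, h]
      rw [this]; trivial
    rw [eq_top_iff]
    rintro g -
    set H := Subgroup.closure ({x, mk 1 c} : Set (F ≃ᵃ[F] F)) with hH
    have hx : x ∈ H := Subgroup.subset_closure (Or.inl rfl)
    have hy : mk 1 c ∈ H := Subgroup.subset_closure (Or.inr rfl)
    have htrans : ∀ d : F, mk 1 d ∈ H := by
      intro d
      rcases eq_or_ne d 0 with rfl | hd
      · rw [mk_one]; exact H.one_mem
      · obtain ⟨m, hm⟩ := hgen (Units.mk0 (d / c) (div_ne_zero hd hc))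
        have hxz : x ^ m = mk (a ^ m) ((x ^ m) 0) := by
          conv_lhs => rw [eq_mk (x ^ m)]
          rw [ucoef_zpow, ha]
        have : x ^ m * mk 1 c * (x ^ m)⁻¹ = mk 1 d := by
          rw [hxz, mk_conj]
          congr 1
          have : ((a ^ m : Fˣ) : F) = d / c := by
            have := congrArg (Units.val) hm
            simpa using this
          rw [this]
          field_simp
        rw [← this]
        exact H.mul_mem (H.mul_mem (H.zpow_mem hx m) hy) (H.inv_mem (H.zpow_mem hx m))
    obtain ⟨m, hm⟩ := hgen (ucoef g)
    change a ^ m = _ at hm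
    have hxz : x ^ m = mk (ucoef g) ((x ^ m) 0) := by
      conv_lhs => rw [eq_mk (x ^ m)]
      rw [ucoef_zpow, ← ha, hm]
    have : g * (x ^ m)⁻¹ = mk 1 (g 0 - (x ^ m) 0) := by
      rw [eq_mk g, hxz, mk_inv, mk_mul]
      congr 1
      · group
      · rw [mk_zero_apply, mk_zero_apply]
        have hne := unit_ne_zero g
        field_simp
        rw [Units.mul_inv]; ring
    have hg : g = mk 1 (g 0 - (x ^ m) 0) * x ^ m := by
      rw [← this]; group
    rw [hg]
    exact H.mul_mem (htrans _) (H.zpow_mem hx m)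

end fin
end AGL

namespace AGL
variable {F : Type} [Field F] [Fintype F] [CharP F 2]

open Subgroup in
/-- The parametrization of map pairs. -/
noncomputable def pairEquiv :
    {p : (F ≃ᵃ[F] F) × (F ≃ᵃ[F] F) // IsMapPair p} ≃
      {a : Fˣ // orderOf a = Nat.card Fˣ} × F × {c : F // c ≠ 0} where
  toFun p := by
    obtain ⟨⟨x, y⟩, hgen, hord⟩ := p
    refine (⟨ucoef x, ?_⟩, x 0, ⟨y 0, ?_⟩)
    · obtain ⟨c, hc, rfl⟩ := (orderOf_eq_two_iff y).mp hord
      exact (closure_eq_top_iff hc).mp hgen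
    · obtain ⟨c, hc, rfl⟩ := (orderOf_eq_two_iff y).mp hord
      rwa [mk_zero_apply]
  invFun q := ⟨(mk q.1.1 q.2.1, mk 1 q.2.2.1), by
    constructor
    · rw [closure_eq_top_iff q.2.2.2, ucoef_mk]
      exact q.1.2
    · exact (orderOf_eq_two_iff _).mpr ⟨q.2.2.1, q.2.2.2, rfl⟩⟩
  left_inv := by
    rintro ⟨⟨x, y⟩, hgen, hord⟩
    obtain ⟨c, hc, rfl⟩ := (orderOf_eq_two_iff y).mp hord
    simp only [Subtype.mk.injEq, Prod.mk.injEq]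
    refine Subtype.ext (Prod.ext (?_ : mk (ucoef x) (x 0) = x) (?_ : mk 1 ((mk 1 c) 0) = mk 1 c))
    · conv_rhs => rw [eq_mk x]
    · rw [mk_zero_apply]
  right_inv := by
    rintro ⟨⟨a, ha⟩, b, ⟨c, hc⟩⟩
    simp only [Subtype.mk.injEq, Prod.mk.injEq, ucoef_mk, mk_zero_apply]

theorem card_generators : Nat.card {a : Fˣ // orderOf a = Nat.card Fˣ} =
    Nat.totient (Nat.card Fˣ) := by
  classical
  rw [Nat.card_eq_fintype_card, Fintype.card_subtype]
  rw [Nat.card_eq_fintype_card]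
  exact IsCyclic.card_orderOf_eq_totient dvd_rfl

theorem card_mapPairs : Nat.card {p : (F ≃ᵃ[F] F) × (F ≃ᵃ[F] F) // IsMapPair p} =
    Nat.totient (Nat.card Fˣ) * Nat.card F * Nat.card Fˣ := by
  rw [Nat.card_congr (pairEquiv (F := F)), Nat.card_prod, Nat.card_prod, card_generators,
    Nat.card_congr (unitsEquivNeZero (G₀ := F)).symm, mul_assoc]


section conj
variable {F : Type} [Field F]

theorem conj_mk (u a : Fˣ) (v b : F) :
    mk u v * mk a b * (mk u v)⁻¹ = mk a ((u : F) * b + v * (1 - (a : F))) := by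
  rw [mk_inv, mk_mul, mk_mul]
  congr 1
  · rw [mul_comm u a]; exact mul_inv_cancel_right a u
  · field_simp; rw [Units.val_mul]; linear_combination (-(a:F) * v) * Units.mul_inv u

theorem conj_translation (g : F ≃ᵃ[F] F) (c : F) :
    g * mk 1 c * g⁻¹ = mk 1 ((ucoef g : F) * c) := by
  conv_lhs => rw [eq_mk g]
  rw [conj_mk]
  congr 1
  simp

end conj

section aut
variable {F : Type} [Field F] [Fintype F] [CharP F 2]

theorem aut_translation (α : (F ≃ᵃ[F] F) ≃* (F ≃ᵃ[F] F)) (c : F) :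
    α (mk 1 c) = mk 1 ((α (mk 1 c)) 0) := by
  rcases eq_or_ne c 0 with rfl | hc
  · rw [mk_one, map_one]
    have h0 : ((1 : F ≃ᵃ[F] F)) 0 = 0 := rfl
    rw [h0, mk_one]
  · have h2 : orderOf (α (mk 1 c)) = 2 := by
      rw [α.orderOf_eq]
      exact (orderOf_eq_two_iff _).mpr ⟨c, hc, rfl⟩
    obtain ⟨d, hd, heq⟩ := (orderOf_eq_two_iff _).mp h2
    rw [heq, mk_zero_apply]

/-- The additive map induced by `α` on translations. -/
def fmap (α : (F ≃ᵃ[F] F) ≃* (F ≃ᵃ[F] F)) (c : F) : F := (α (mk 1 c)) 0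

theorem aut_translation' (α : (F ≃ᵃ[F] F) ≃* (F ≃ᵃ[F] F)) (c : F) :
    α (mk 1 c) = mk 1 (fmap α c) := aut_translation α c

theorem fmap_zero (α : (F ≃ᵃ[F] F) ≃* (F ≃ᵃ[F] F)) : fmap α 0 = 0 := by
  unfold fmap
  rw [mk_one, map_one]
  rfl

theorem fmap_add (α : (F ≃ᵃ[F] F) ≃* (F ≃ᵃ[F] F)) (c d : F) :
    fmap α (c + d) = fmap α c + fmap α d := by
  have h : mk 1 (c + d) = mk 1 c * mk 1 d := by
    rw [mk_mul]; congr 1 <;> simp [add_comm]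
  have h2 : mk 1 (fmap α (c + d)) = mk 1 ((1:F) * fmap α d + fmap α c) := by
    rw [← aut_translation' α (c + d), h, map_mul, aut_translation' α c,
      aut_translation' α d, mk_mul]
    congr 1
    exact one_mul 1
  have := (mk_injective2 h2).2
  rw [this]; ring

theorem fmap_leftInverse (α : (F ≃ᵃ[F] F) ≃* (F ≃ᵃ[F] F)) (c : F) :
    fmap α.symm (fmap α c) = c := by
  have h : α.symm (α (mk 1 c)) = mk 1 c := α.symm_apply_apply _
  rw [aut_translation' α c, aut_translation' α.symm (fmap α c)] at h
  exact (mk_injective2 h).2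

theorem fmap_injective (α : (F ≃ᵃ[F] F) ≃* (F ≃ᵃ[F] F)) : Function.Injective (fmap α) :=
  Function.LeftInverse.injective (fmap_leftInverse α)

theorem fmap_surjective (α : (F ≃ᵃ[F] F) ≃* (F ≃ᵃ[F] F)) : Function.Surjective (fmap α) := by
  intro c
  refine ⟨fmap α.symm c, ?_⟩
  have := fmap_leftInverse α.symm c
  simpa using this

theorem fmap_key (α : (F ≃ᵃ[F] F) ≃* (F ≃ᵃ[F] F)) (g : F ≃ᵃ[F] F) (c : F) :
    fmap α ((ucoef g : F) * c) = (ucoef (α g) : F) * fmap α c := by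
  have h := congrArg α (conj_translation g c)
  rw [map_mul, map_mul, map_inv, aut_translation' α c, aut_translation' α _,
    conj_translation (α g) (fmap α c)] at h
  exact ((mk_injective2 h).2).symm

theorem fmap_one_ne_zero (α : (F ≃ᵃ[F] F) ≃* (F ≃ᵃ[F] F)) : fmap α 1 ≠ 0 := by
  intro h
  have := fmap_injective α (h.trans (fmap_zero α).symm)
  exact one_ne_zero this

theorem fmap_mul (α : (F ≃ᵃ[F] F) ≃* (F ≃ᵃ[F] F)) (a c : F) :
    fmap α (a * c) * fmap α 1 = fmap α a * fmap α c := by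
  rcases eq_or_ne a 0 with rfl | ha
  · rw [zero_mul, fmap_zero, zero_mul, zero_mul]
  · have h1 := fmap_key α (mk (Units.mk0 a ha) 0) c
    have h2 := fmap_key α (mk (Units.mk0 a ha) 0) 1
    rw [ucoef_mk] at h1 h2
    have hu : ((Units.mk0 a ha : Fˣ) : F) = a := rfl
    rw [hu] at h1 h2
    rw [mul_one] at h2
    rw [h1, h2]
    ring

/-- The ring homomorphism induced by `α`. -/
def rhomOf (α : (F ≃ᵃ[F] F) ≃* (F ≃ᵃ[F] F)) : F →+* F where
  toFun := fun c => (fmap α 1)⁻¹ * fmap α c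
  map_one' := inv_mul_cancel₀ (fmap_one_ne_zero α)
  map_mul' := by
    intro a c
    have h := fmap_mul α a c
    have hne := fmap_one_ne_zero α
    field_simp
    linear_combination h
  map_zero' := by show _ = _; rw [fmap_zero, mul_zero]
  map_add' := by intro a c; show _ = _; rw [fmap_add, mul_add]

@[simp] theorem rhomOf_apply (α : (F ≃ᵃ[F] F) ≃* (F ≃ᵃ[F] F)) (c : F) :
    rhomOf α c = (fmap α 1)⁻¹ * fmap α c := rfl

theorem rhomOf_bijective (α : (F ≃ᵃ[F] F) ≃* (F ≃ᵃ[F] F)) :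
    Function.Bijective (rhomOf α) := by
  constructor
  · intro u v huv
    rw [rhomOf_apply, rhomOf_apply] at huv
    exact fmap_injective α (mul_left_cancel₀ (inv_ne_zero (fmap_one_ne_zero α)) huv)
  · intro u
    obtain ⟨v, hv⟩ := fmap_surjective α (fmap α 1 * u)
    refine ⟨v, ?_⟩
    rw [rhomOf_apply, hv]
    have hne := fmap_one_ne_zero α
    field_simp

/-- The field automorphism induced by `α`. -/
noncomputable def ringAutOf (α : (F ≃ᵃ[F] F) ≃* (F ≃ᵃ[F] F)) : F ≃+* F :=
  RingEquiv.ofBijective (rhomOf α) (rhomOf_bijective α)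

theorem ringAutOf_apply (α : (F ≃ᵃ[F] F) ≃* (F ≃ᵃ[F] F)) (c : F) :
    ringAutOf α c = (fmap α 1)⁻¹ * fmap α c := rfl

/-- Lift a field automorphism to a function on the affine group. -/
def liftFun (h : F ≃+* F) (g : F ≃ᵃ[F] F) : F ≃ᵃ[F] F :=
  mk (Units.map h.toMonoidHom (ucoef g)) (h (g 0))

theorem liftFun_mk (h : F ≃+* F) (a : Fˣ) (b : F) :
    liftFun h (mk a b) = mk (Units.map h.toMonoidHom a) (h b) := by
  unfold liftFun; rw [ucoef_mk, mk_zero_apply]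

/-- Lift a field automorphism to an automorphism of the affine group. -/
def lift (h : F ≃+* F) : (F ≃ᵃ[F] F) ≃* (F ≃ᵃ[F] F) where
  toFun := liftFun h
  invFun := liftFun h.symm
  left_inv g := by
    show liftFun h.symm (mk _ _) = g
    rw [liftFun_mk]
    conv_rhs => rw [eq_mk g]
    congr 1
    · ext; simp
    · simp
  right_inv g := by
    show liftFun h (mk _ _) = g
    rw [liftFun_mk]
    conv_rhs => rw [eq_mk g]
    congr 1
    · ext; simp
    · simp
  map_mul' g g' := by
    have hgg : g * g' = mk (ucoef g * ucoef g') ((ucoef g : F) * g' 0 + g 0) := by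
      conv_lhs => rw [eq_mk g, eq_mk g']
      rw [mk_mul]
    show liftFun h (g * g') = liftFun h g * liftFun h g'
    rw [hgg, liftFun_mk]
    show _ = mk _ _ * mk _ _
    rw [mk_mul]
    congr 1
    · rw [map_mul]
    · simp

theorem lift_mk_one (h : F ≃+* F) (c : F) : lift h (mk 1 c) = mk 1 (h c) := by
  show liftFun h (mk 1 c) = mk 1 (h c)
  rw [liftFun_mk, map_one]

/-- Extensionality for automorphisms on a generating set. -/
theorem aut_ext {G : Type} [Group G] {α β : G ≃* G} {s : Set G}
    (hs : Subgroup.closure s = ⊤) (h : Set.EqOn (⇑α) (⇑β) s) : α = β := by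
  have := MonoidHom.eq_of_eqOn_dense hs (f := α.toMonoidHom) (g := β.toMonoidHom) h
  exact MulEquiv.toMonoidHom_injective this

section psi
variable (a₀ : Fˣ)

/-- The classification map for automorphisms. -/
noncomputable def psi (α : (F ≃ᵃ[F] F) ≃* (F ≃ᵃ[F] F)) : (F ≃+* F) × Fˣ × F :=
  (ringAutOf α, Units.mk0 (fmap α 1) (fmap_one_ne_zero α), (α (mk a₀ 0)) 0)

theorem fmap_eq (α : (F ≃ᵃ[F] F) ≃* (F ≃ᵃ[F] F)) (c : F) :
    fmap α c = fmap α 1 * ringAutOf α c := by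
  rw [ringAutOf_apply]
  have hne := fmap_one_ne_zero α
  field_simp

theorem psi_injective (ha₀ : orderOf a₀ = Nat.card Fˣ) :
    Function.Injective (psi (F := F) a₀) := by
  intro α β hab
  have h1 : ringAutOf α = ringAutOf β := congrArg Prod.fst hab
  have h2 : fmap α 1 = fmap β 1 := by
    have := congrArg (fun p => ((p.2.1 : Fˣ) : F)) hab
    simpa [psi] using this
  have h3 : (α (mk a₀ 0)) 0 = (β (mk a₀ 0)) 0 := congrArg (fun p => p.2.2) hab
  have hf : ∀ c, fmap α c = fmap β c := by
    intro c
    rw [fmap_eq α c, fmap_eq β c, h1, h2]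
  have hx : α (mk a₀ 0) = β (mk a₀ 0) := by
    have hka := fmap_key α (mk a₀ 0) 1
    have hkb := fmap_key β (mk a₀ 0) 1
    rw [ucoef_mk] at hka hkb
    rw [hf _, hf 1] at hka
    have hu : (ucoef (α (mk a₀ 0)) : F) = (ucoef (β (mk a₀ 0)) : F) := by
      have hne := fmap_one_ne_zero β
      exact mul_right_cancel₀ hne (hka.symm.trans hkb)
    conv_lhs => rw [eq_mk (α (mk a₀ 0))]
    conv_rhs => rw [eq_mk (β (mk a₀ 0))]
    rw [h3]
    congr 1
    exact Units.ext hu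
  apply aut_ext (s := {mk a₀ 0, mk 1 (1 : F)})
  · exact (closure_eq_top_iff one_ne_zero).mpr (by rwa [ucoef_mk])
  · rintro g (rfl | rfl)
    · exact hx
    · rw [aut_translation' α, aut_translation' β, hf 1]

theorem psi_surjective (ha1 : a₀ ≠ 1) :
    Function.Surjective (psi (F := F) a₀) := by
  rintro ⟨h, d, b'⟩
  set a₀' : Fˣ := Units.map h.toMonoidHom a₀ with ha₀'
  have ha1' : (a₀' : F) ≠ 1 := by
    intro hh
    apply ha1
    have : h a₀ = h 1 := by rw [map_one]; exact hh
    exact Units.ext (h.injective this)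
  have hsub : (1 : F) - (a₀' : F) ≠ 0 := by
    intro hh
    exact ha1' (by linear_combination -hh)
  set m : F := b' / (1 - (a₀' : F)) with hm
  set α : (F ≃ᵃ[F] F) ≃* (F ≃ᵃ[F] F) :=
    MulAut.conj (mk 1 m) * (MulAut.conj (mk d 0) * lift h) with hα
  have hαtrans : ∀ c : F, α (mk 1 c) = mk 1 ((d : F) * h c) := by
    intro c
    show MulAut.conj (mk 1 m) (MulAut.conj (mk d 0) (lift h (mk 1 c))) = _
    rw [lift_mk_one, MulAut.conj_apply, MulAut.conj_apply, conj_mk, conj_mk]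
    congr 1
    simp
  have hαx : α (mk a₀ 0) = mk a₀' (m * (1 - (a₀' : F))) := by
    show MulAut.conj (mk 1 m) (MulAut.conj (mk d 0) (lift h (mk a₀ 0))) = _
    have : lift h (mk a₀ 0) = mk a₀' (h 0) := by
      show liftFun h (mk a₀ 0) = _
      rw [liftFun_mk]
    rw [this, map_zero, MulAut.conj_apply, MulAut.conj_apply, conj_mk, conj_mk]
    congr 1
    ring
  have hfα : ∀ c, fmap α c = (d : F) * h c := by
    intro c
    unfold fmap
    rw [hαtrans c, mk_zero_apply]
  refine ⟨α, ?_⟩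
  unfold psi
  refine Prod.ext ?_ (Prod.ext ?_ ?_)
  · ext c
    rw [ringAutOf_apply, hfα, hfα, map_one, mul_one]
    field_simp
  · apply Units.ext
    show fmap α 1 = (d : F)
    rw [hfα, map_one, mul_one]
  · show (α (mk a₀ 0)) 0 = b'
    rw [hαx, mk_zero_apply, hm]
    field_simp

end psi

/-- Coordinates on the affine group. -/
def gEquiv : (F ≃ᵃ[F] F) ≃ Fˣ × F where
  toFun g := (ucoef g, g 0)
  invFun p := mk p.1 p.2
  left_inv g := (eq_mk g).symm
  right_inv p := by
    refine Prod.ext ?_ ?_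
    · exact ucoef_mk p.1 p.2
    · exact mk_zero_apply p.1 p.2

instance : Finite (F ≃ᵃ[F] F) := Finite.of_equiv _ (gEquiv (F := F)).symm

instance : Finite ((F ≃ᵃ[F] F) ≃* (F ≃ᵃ[F] F)) :=
  Finite.of_injective (fun α => (α : (F ≃ᵃ[F] F) → (F ≃ᵃ[F] F)))
    (fun α β h => MulEquiv.ext (congrFun h))

theorem card_aut (hq : 1 < Nat.card Fˣ) :
    Nat.card ((F ≃ᵃ[F] F) ≃* (F ≃ᵃ[F] F)) =
      Nat.card (F ≃+* F) * Nat.card Fˣ * Nat.card F := by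
  obtain ⟨a₀, ha₀⟩ := IsCyclic.exists_generator (α := Fˣ)
  have horder : orderOf a₀ = Nat.card Fˣ := orderOf_eq_card_of_forall_mem_zpowers ha₀
  have ha1 : a₀ ≠ 1 := by
    intro h
    rw [h, orderOf_one] at horder
    omega
  have hbij : Function.Bijective (psi (F := F) a₀) :=
    ⟨psi_injective a₀ horder, psi_surjective a₀ ha1⟩
  rw [Nat.card_congr (Equiv.ofBijective _ hbij), Nat.card_prod, Nat.card_prod, mul_assoc]

/-- The action of automorphisms on map pairs. -/
instance mapAction : MulAction ((F ≃ᵃ[F] F) ≃* (F ≃ᵃ[F] F))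
    {p : (F ≃ᵃ[F] F) × (F ≃ᵃ[F] F) // IsMapPair p} where
  smul α p := ⟨(α p.1.1, α p.1.2), by
    obtain ⟨⟨x, y⟩, hgen, hord⟩ := p
    constructor
    · show Subgroup.closure {α x, α y} = ⊤
      have himg : ({α x, α y} : Set (F ≃ᵃ[F] F)) = α '' {x, y} := by
        rw [Set.image_insert_eq, Set.image_singleton]
      rw [himg, show (⇑α '' {x, y}) = (⇑α.toMonoidHom '' {x, y}) from rfl,
        ← MonoidHom.map_closure, hgen]
      exact Subgroup.map_top_of_surjective _ α.surjective
    · show orderOf (α y) = 2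
      rw [α.orderOf_eq]
      exact hord⟩
  one_smul p := rfl
  mul_smul α β p := rfl

theorem smul_def (α : (F ≃ᵃ[F] F) ≃* (F ≃ᵃ[F] F))
    (p : {p : (F ≃ᵃ[F] F) × (F ≃ᵃ[F] F) // IsMapPair p}) :
    (α • p).1 = (α p.1.1, α p.1.2) := rfl

theorem stab_eq_bot (p : {p : (F ≃ᵃ[F] F) × (F ≃ᵃ[F] F) // IsMapPair p}) :
    MulAction.stabilizer ((F ≃ᵃ[F] F) ≃* (F ≃ᵃ[F] F)) p = ⊥ := by
  rw [eq_bot_iff]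
  intro α hα
  have h : α • p = p := hα
  have h1 : α p.1.1 = p.1.1 := congrArg Prod.fst (Subtype.ext_iff.mp h)
  have h2 : α p.1.2 = p.1.2 := congrArg Prod.snd (Subtype.ext_iff.mp h)
  have : α = 1 := by
    apply aut_ext (s := {p.1.1, p.1.2}) p.2.1
    rintro g (rfl | rfl)
    · exact h1
    · exact h2
  exact Subgroup.mem_bot.mpr this

theorem card_S_eq :
    Nat.card {p : (F ≃ᵃ[F] F) × (F ≃ᵃ[F] F) // IsMapPair p} =
      Nat.card (Quot (AutEquivOn (G := F ≃ᵃ[F] F) IsMapPair)) *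
        Nat.card ((F ≃ᵃ[F] F) ≃* (F ≃ᵃ[F] F)) := by
  set M := (F ≃ᵃ[F] F) ≃* (F ≃ᵃ[F] F)
  set S := {p : (F ≃ᵃ[F] F) × (F ≃ᵃ[F] F) // IsMapPair p}
  have hrel : ∀ p q : S, AutEquivOn IsMapPair p q ↔ (MulAction.orbitRel M S).r p q := by
    intro p q
    constructor
    · rintro ⟨α, h1, h2⟩
      show p ∈ MulAction.orbit M q
      refine ⟨α⁻¹, ?_⟩
      have hsm : α • p = q := Subtype.ext (Prod.ext h1 h2)
      show α⁻¹ • q = p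
      rw [← hsm, inv_smul_smul]
    · rintro ⟨β, hβ⟩
      have hβ' : β • q = p := hβ
      have hq : β⁻¹ • p = q := by rw [← hβ', inv_smul_smul]
      exact ⟨β⁻¹, congrArg Prod.fst (Subtype.ext_iff.mp hq),
        congrArg Prod.snd (Subtype.ext_iff.mp hq)⟩
  have hquot : Quot (AutEquivOn (G := F ≃ᵃ[F] F) IsMapPair) ≃
      MulAction.orbitRel.Quotient M S :=
    Quot.congr (Equiv.refl S) (fun a b => hrel a b)
  have hfib : ∀ ω : MulAction.orbitRel.Quotient M S,
      (M ⧸ MulAction.stabilizer M ω.out) ≃ M := fun ω =>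
    (Subgroup.quotientEquivOfEq (stab_eq_bot _)).trans QuotientGroup.quotientBot.toEquiv
  have hS : S ≃ (MulAction.orbitRel.Quotient M S) × M :=
    (MulAction.selfEquivSigmaOrbitsQuotientStabilizer M S).trans
      ((Equiv.sigmaCongrRight hfib).trans (Equiv.sigmaEquivProd _ _))
  rw [Nat.card_congr hS, Nat.card_prod, Nat.card_congr hquot]

end aut

theorem card_ringAut (e : ℕ) (he : e ≠ 0) :
    Nat.card (GaloisField 2 e ≃+* GaloisField 2 e) = e := by
  classical
  have hEquiv : (GaloisField 2 e ≃+* GaloisField 2 e) ≃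
      (GaloisField 2 e ≃ₐ[ZMod 2] GaloisField 2 e) :=
    { toFun := fun h => AlgEquiv.ofRingEquiv (f := h) (fun x => by
        have hsub : h.toRingHom.comp (algebraMap (ZMod 2) (GaloisField 2 e)) =
            algebraMap (ZMod 2) (GaloisField 2 e) := Subsingleton.elim _ _
        exact RingHom.congr_fun hsub x)
      invFun := fun h => h.toRingEquiv
      left_inv := fun h => by ext x; rfl
      right_inv := fun h => by ext x; rfl }
  rw [Nat.card_congr hEquiv, IsGalois.card_aut_eq_finrank,
    GaloisField.finrank 2 he]

end AGL

/-- For `e ≥ 2`, `q = 2^e`, the affine group `AGL₁(q) = (F ≃ᵃ[F] F)` has exactly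
`φ(q-1)·q·(q-1)` generating pairs `(x,y)` with `y` an involution, falling into
exactly `φ(q-1)/e` Aut-equivalence classes. -/
theorem agl1_count_maps (e : ℕ) (he : 2 ≤ e) :
    Nat.card {p : (GaloisField 2 e ≃ᵃ[GaloisField 2 e] GaloisField 2 e) ×
        (GaloisField 2 e ≃ᵃ[GaloisField 2 e] GaloisField 2 e) // IsMapPair p} =
      Nat.totient (2 ^ e - 1) * 2 ^ e * (2 ^ e - 1) ∧
    Nat.card (Quot (AutEquivOn
      (G := GaloisField 2 e ≃ᵃ[GaloisField 2 e] GaloisField 2 e) IsMapPair)) =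
      Nat.totient (2 ^ e - 1) / e := by
  have he0 : e ≠ 0 := by omega
  set F := GaloisField 2 e with hFdef
  haveI : Fintype F := Fintype.ofFinite F
  have hF : Nat.card F = 2 ^ e := GaloisField.card 2 e he0
  have hU : Nat.card Fˣ = 2 ^ e - 1 := by rw [Nat.card_units, hF]
  have h4 : 4 ≤ 2 ^ e := by
    calc (4 : ℕ) = 2 ^ 2 := by norm_num
    _ ≤ 2 ^ e := Nat.pow_le_pow_right (by norm_num) he
  have h1 := AGL.card_mapPairs (F := F)
  rw [hF, hU] at h1
  refine ⟨h1, ?_⟩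
  have h2 := AGL.card_S_eq (F := F)
  have hq : 1 < Nat.card Fˣ := by rw [hU]; omega
  have h3 := AGL.card_aut (F := F) hq
  rw [AGL.card_ringAut e he0, hU, hF] at h3
  rw [h3, h1] at h2
  set N := Nat.card (Quot (AutEquivOn (G := F ≃ᵃ[F] F) IsMapPair)) with hN
  have hpos : 0 < 2 ^ e * (2 ^ e - 1) := Nat.mul_pos (by omega) (by omega)
  have hTe : Nat.totient (2 ^ e - 1) = N * e := by
    have hc : Nat.totient (2 ^ e - 1) * (2 ^ e * (2 ^ e - 1)) =
        (N * e) * (2 ^ e * (2 ^ e - 1)) := by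
      calc Nat.totient (2 ^ e - 1) * (2 ^ e * (2 ^ e - 1))
          = Nat.totient (2 ^ e - 1) * 2 ^ e * (2 ^ e - 1) := by ring
        _ = N * (e * (2 ^ e - 1) * 2 ^ e) := h2
        _ = (N * e) * (2 ^ e * (2 ^ e - 1)) := by ring
    exact Nat.eq_of_mul_eq_mul_right hpos hc
  exact (Nat.div_eq_of_eq_mul_left (by omega) hTe).symm
end

section
/- Let e > 2, q = 2^e, F = GaloisField 2 e, and let G be the one-dimensional affine group AGL₁(q), realized as the group of affine self-equivalences F ≃ᵃ[F] F. Then for every generating pair (x,y) of G with orderOf y = 2, there is no group automorphism α of G with α x = x⁻¹ and α y = y⁻¹. (All the orientably regular maps with orientation-preserving automorphism group AGL₁(2^e), e > 2, are chiral.) -/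
section Aux
variable {F : Type*} [Field F]

private lemma aglAux_apply_eq (g : F ≃ᵃ[F] F) (t : F) :
    g t = g.linear 1 * t + g 0 := by
  have h := g.map_vadd 0 t
  have h1 : g.linear t = t * g.linear 1 := by
    conv_lhs => rw [show t = t • (1 : F) by simp]
    rw [map_smul]; simp [smul_eq_mul]
  simpa [h1, mul_comm] using h

private lemma aglAux_A_ne_zero (g : F ≃ᵃ[F] F) : g.linear 1 ≠ 0 := by
  intro h
  have : g.linear 1 = g.linear 0 := by simpa using h
  have := g.linear.injective this
  exact one_ne_zero this

private lemma aglAux_ext {g h : F ≃ᵃ[F] F} (hA : g.linear 1 = h.linear 1)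
    (hB : g 0 = h 0) : g = h := by
  apply AffineEquiv.ext
  intro t
  rw [aglAux_apply_eq g t, aglAux_apply_eq h t, hA, hB]

private lemma aglAux_B_mul (g h : F ≃ᵃ[F] F) :
    (g * h) 0 = g.linear 1 * h 0 + g 0 := by
  have : (g * h) 0 = g (h 0) := rfl
  rw [this, aglAux_apply_eq]

private lemma aglAux_A_mul (g h : F ≃ᵃ[F] F) :
    (g * h).linear 1 = g.linear 1 * h.linear 1 := by
  have e0 : (g * h).linear 1 = g.linear (h.linear 1) := rfl
  rw [e0, show h.linear 1 = h.linear 1 • (1 : F) by simp, map_smul]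
  simp [smul_eq_mul, mul_comm]

private lemma aglAux_A_one : ((1 : F ≃ᵃ[F] F)).linear 1 = 1 := rfl
private lemma aglAux_B_one : ((1 : F ≃ᵃ[F] F)) 0 = 0 := rfl

/-- The affine map `t ↦ u * t + v` as an affine equivalence, for `u ≠ 0`. -/
private noncomputable def aglAux_aff (u : F) (hu : u ≠ 0) (v : F) : F ≃ᵃ[F] F :=
  AffineEquiv.constVAdd F F v * (LinearEquiv.smulOfNeZero F F u hu).toAffineEquiv

private lemma aglAux_aff_apply (u : F) (hu : u ≠ 0) (v : F) (t : F) :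
    aglAux_aff u hu v t = u * t + v := by
  show v +ᵥ (u • t) = u * t + v
  simp [smul_eq_mul, add_comm]

private lemma aglAux_aff_A (u : F) (hu : u ≠ 0) (v : F) :
    (aglAux_aff u hu v).linear 1 = u := by
  have h1 := aglAux_apply_eq (aglAux_aff u hu v) 1
  rw [aglAux_aff_apply, aglAux_aff_apply] at h1
  have h2 : u = (aglAux_aff u hu v).linear 1 := by simpa using h1
  exact h2.symm

private lemma aglAux_aff_B (u : F) (hu : u ≠ 0) (v : F) :
    (aglAux_aff u hu v) 0 = v := by
  rw [aglAux_aff_apply]; ring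

end Aux

/-- For `e > 2`, no generating pair `(x,y)` with `y` an involution of the affine
group `AGL₁(2^e) = (F ≃ᵃ[F] F)` admits an automorphism inverting both `x` and `y`:
all the corresponding orientably regular maps are chiral. -/
theorem agl1_maps_chiral (e : ℕ) (he : 2 < e)
    (x y : GaloisField 2 e ≃ᵃ[GaloisField 2 e] GaloisField 2 e)
    (hgen : Subgroup.closure
      ({x, y} : Set (GaloisField 2 e ≃ᵃ[GaloisField 2 e] GaloisField 2 e)) = ⊤)
    (hy : orderOf y = 2) :
    ¬ ∃ α : (GaloisField 2 e ≃ᵃ[GaloisField 2 e] GaloisField 2 e) ≃*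
        (GaloisField 2 e ≃ᵃ[GaloisField 2 e] GaloisField 2 e),
      α x = x⁻¹ ∧ α y = y⁻¹ := by
  rintro ⟨α, hax, -⟩
  set F := GaloisField 2 e with hF
  have h2 : (2 : F) = 0 := by
    have := CharP.cast_eq_zero F 2
    exact_mod_cast this
  -- squares: frobenius injectivity
  have hsq : ∀ s t : F, s ^ 2 = t ^ 2 → s = t := by
    intro s t hst
    apply frobenius_inj F 2
    rw [frobenius_def, frobenius_def]
    exact hst
  -- multiplier of x
  set a : F := x.linear 1 with ha_def
  have ha : a ≠ 0 := aglAux_A_ne_zero x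
  set au : Fˣ := Units.mk0 a ha with hau_def
  -- the multiplier monoid hom
  have A_mul := fun g h : F ≃ᵃ[F] F => aglAux_A_mul g h
  let π : (F ≃ᵃ[F] F) →* Fˣ :=
    { toFun := fun g => Units.mk0 (g.linear 1) (aglAux_A_ne_zero g)
      map_one' := by ext; exact aglAux_A_one
      map_mul' := fun g h => by ext; exact aglAux_A_mul g h }
  have hπ : ∀ g : F ≃ᵃ[F] F, (π g : F) = g.linear 1 := fun g => rfl
  -- y is a translation
  have hy2 : y * y = 1 := by
    have := pow_orderOf_eq_one y
    rwa [hy, pow_two] at this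
  have hAy : y.linear 1 = 1 := by
    have hAA := aglAux_A_mul y y
    rw [hy2, aglAux_A_one] at hAA
    apply hsq
    rw [pow_two, pow_two, one_mul, ← hAA]
  -- every unit is a power of au
  have hzpow : ∀ u : Fˣ, u ∈ Subgroup.zpowers au := by
    intro u
    have hK : Subgroup.closure ({x, y} : Set (F ≃ᵃ[F] F)) ≤
        (Subgroup.zpowers au).comap π := by
      rw [Subgroup.closure_le]
      intro g hg
      simp only [Set.mem_insert_iff, Set.mem_singleton_iff] at hg
      rcases hg with hg | hg
      · subst hg
        exact Subgroup.mem_comap.2 ⟨1, by ext; simp [hπ, hau_def, ha_def]⟩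
      · subst hg
        refine Subgroup.mem_comap.2 ⟨0, ?_⟩
        ext; simp [hπ, hAy]
    rw [hgen] at hK
    have hmem : aglAux_aff (u : F) u.ne_zero 0 ∈ (⊤ : Subgroup (F ≃ᵃ[F] F)) :=
      Subgroup.mem_top _
    have := hK hmem
    rw [Subgroup.mem_comap] at this
    convert this using 1
    ext
    rw [hπ, aglAux_aff_A]
  -- order of au
  have hcardF : Nat.card F = 2 ^ e := GaloisField.card 2 e (by omega)
  have hcardU : Nat.card Fˣ = 2 ^ e - 1 := by
    rw [Nat.card_units, hcardF]
  have hord : orderOf au = 2 ^ e - 1 := by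
    rw [orderOf_eq_card_of_forall_mem_zpowers hzpow, hcardU]
  have h8 : 8 ≤ 2 ^ e := by
    calc (8 : ℕ) = 2 ^ 3 := rfl
    _ ≤ 2 ^ e := Nat.pow_le_pow_right (by norm_num) (by omega)
  -- a ≠ 1
  have hane : a ≠ 1 := by
    intro h1
    have : au = 1 := by ext; simpa [hau_def] using h1
    rw [this, orderOf_one] at hord
    omega
  -- translations
  let T : F → (F ≃ᵃ[F] F) := fun b => aglAux_aff 1 one_ne_zero b
  have hT_A : ∀ b, (T b).linear 1 = 1 := fun b => aglAux_aff_A 1 one_ne_zero b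
  have hT_B : ∀ b, T b 0 = b := fun b => aglAux_aff_B 1 one_ne_zero b
  have hT_mul : ∀ b c, T b * T c = T (b + c) := by
    intro b c
    apply aglAux_ext
    · rw [aglAux_A_mul, hT_A, hT_A, hT_A, one_mul]
    · rw [aglAux_B_mul, hT_A, hT_B, hT_B, hT_B, one_mul, add_comm]
  have hT_sq : ∀ b, T b * T b = 1 := by
    intro b
    rw [hT_mul]
    apply aglAux_ext
    · rw [hT_A, aglAux_A_one]
    · rw [hT_B, aglAux_B_one]
      have : b + b = 2 * b := by ring
      rw [this, h2, zero_mul]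
  -- α maps translations to translations
  have hαT_A : ∀ b, (α (T b)).linear 1 = 1 := by
    intro b
    have h1 : α (T b) * α (T b) = 1 := by
      rw [← map_mul, hT_sq, map_one]
    have := aglAux_A_mul (α (T b)) (α (T b))
    rw [h1, aglAux_A_one] at this
    apply hsq
    rw [pow_two, pow_two, one_mul, ← this]
  set φ : F → F := fun b => (α (T b)) 0 with hφ_def
  have hφ_add : ∀ b c, φ (b + c) = φ b + φ c := by
    intro b c
    have : α (T (b + c)) = α (T b) * α (T c) := by rw [← map_mul, hT_mul]
    rw [hφ_def]
    show (α (T (b+c))) 0 = (α (T b)) 0 + (α (T c)) 0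
    rw [this, aglAux_B_mul, hαT_A, one_mul, add_comm]
  -- inverse of x facts
  have hAi : a * x⁻¹.linear 1 = 1 := by
    have := aglAux_A_mul x x⁻¹
    rw [mul_inv_cancel, aglAux_A_one] at this
    rw [← ha_def] at this
    exact this.symm
  have hBi : a * x⁻¹ 0 + x 0 = 0 := by
    have := aglAux_B_mul x x⁻¹
    rw [mul_inv_cancel, aglAux_B_one] at this
    rw [← ha_def] at this
    exact this.symm
  -- conjugation: x * T b * x⁻¹ = T (a * b)
  have hconj : ∀ b, x * T b * x⁻¹ = T (a * b) := by
    intro b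
    apply aglAux_ext
    · rw [aglAux_A_mul, aglAux_A_mul, hT_A, hT_A, ← ha_def, mul_one]
      exact hAi
    · rw [aglAux_B_mul, aglAux_B_mul, aglAux_A_mul, hT_A, hT_B, hT_B, ← ha_def]
      have : a * 1 * x⁻¹ 0 + (a * b + x 0) = a * b + (a * x⁻¹ 0 + x 0) := by ring
      rw [this, hBi, add_zero]
  -- key functional equation: a * φ (a * b) = φ b
  have hkey : ∀ b, a * φ (a * b) = φ b := by
    intro b
    have h1 : α (T (a * b)) = x⁻¹ * α (T b) * x := by
      rw [← hconj b, map_mul, map_mul, map_inv, hax, inv_inv]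
    have h2 : φ (a * b) = (x⁻¹ * α (T b) * x) 0 := by
      rw [hφ_def]; show (α (T (a*b))) 0 = _; rw [h1]
    rw [aglAux_B_mul, aglAux_B_mul, aglAux_A_mul, hαT_A, mul_one] at h2
    have hb : φ b = (α (T b)) 0 := rfl
    rw [h2, hb]
    linear_combination (x 0) * hAi + ((α (T b)) 0) * hAi + hBi
  -- φ(a⁻¹ * b) = a * φ b
  have hkey' : ∀ b, φ (a⁻¹ * b) = a * φ b := by
    intro b
    have := hkey (a⁻¹ * b)
    rw [show a * (a⁻¹ * b) = b by rw [← mul_assoc, mul_inv_cancel₀ ha, one_mul]] at this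
    exact this.symm
  -- powers: φ ((au^k : F) * b) = (au^k)⁻¹ * φ b
  have hpow : ∀ k : ℤ, ∀ b : F, φ ((↑(au ^ k) : F) * b) = (↑((au ^ k)⁻¹) : F) * φ b := by
    intro k
    induction k using Int.induction_on with
    | zero => intro b; simp
    | succ n ih =>
      intro b
      have e1 : (↑(au ^ ((n : ℤ) + 1)) : F) * b = a * ((↑(au ^ (n : ℤ)) : F) * b) := by
        rw [zpow_add_one]
        push_cast [hau_def]
        simp only [Units.val_mk0]
        ring
      rw [e1]
      have := hkey ((↑(au ^ (n : ℤ)) : F) * b)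
      have e2 : φ (a * ((↑(au ^ (n:ℤ)) : F) * b)) = a⁻¹ * φ ((↑(au ^ (n:ℤ)) : F) * b) := by
        have h4 : a⁻¹ * a = 1 := inv_mul_cancel₀ ha
        linear_combination a⁻¹ * this - φ (a * ((↑(au ^ (n:ℤ)) : F) * b)) * h4
      rw [e2, ih b]
      rw [zpow_add_one, mul_inv]
      push_cast [hau_def]
      simp only [Units.val_mk0]
      ring
    | pred n ih =>
      intro b
      have e1 : (↑(au ^ (-(n : ℤ) - 1)) : F) * b = a⁻¹ * ((↑(au ^ (-(n : ℤ))) : F) * b) := by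
        rw [zpow_sub_one]
        push_cast [hau_def]
        simp only [Units.val_mk0]
        ring
      rw [e1, hkey', ih b, zpow_sub_one, mul_inv, inv_inv]
      push_cast [hau_def]
      simp only [Units.val_mk0]
      ring
  -- φ 1 ≠ 0
  have hT1 : T (1 : F) ≠ 1 := by
    intro h
    have := hT_B 1
    rw [h, aglAux_B_one] at this
    exact one_ne_zero this.symm
  set c : F := φ 1 with hc_def
  have hc : c ≠ 0 := by
    intro h0
    apply hT1
    apply α.injective
    rw [map_one]
    apply aglAux_ext
    · rw [hαT_A, aglAux_A_one]
    · show φ 1 = (1 : F ≃ᵃ[F] F) 0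
      rw [← hc_def, h0, aglAux_B_one]
  -- φ u = u⁻¹ * c for u ≠ 0
  have hφ_inv : ∀ u : F, u ≠ 0 → φ u = u⁻¹ * c := by
    intro u hu
    obtain ⟨k, hk⟩ := hzpow (Units.mk0 u hu)
    have hk' : au ^ k = Units.mk0 u hu := hk
    have hk1 : (↑(au ^ k) : F) = u := by rw [hk']; rfl
    have hk2 : (↑((au ^ k)⁻¹) : F) = u⁻¹ := by rw [hk']; simp
    have := hpow k 1
    rw [mul_one, hk1, hk2] at this
    rw [this, ← hc_def]
  -- the punchline
  have h1a : (1 : F) + a ≠ 0 := by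
    intro h0
    apply hane
    linear_combination h0 - h2
  have heq : ((1 : F) + a)⁻¹ * c = c + a⁻¹ * c := by
    have := hφ_add 1 a
    rw [hφ_inv 1 one_ne_zero, hφ_inv a ha, hφ_inv (1 + a) h1a, inv_one, one_mul] at this
    exact this
  have heq2 : ((1 : F) + a)⁻¹ = 1 + a⁻¹ := by
    apply mul_right_cancel₀ hc
    rw [heq]; ring
  have hpoly : a ^ 2 + a + 1 = 0 := by
    have h3 : (1 : F) = (1 + a) * (1 + a⁻¹) := by
      rw [← heq2, mul_inv_cancel₀ h1a]
    have h4 : a * a⁻¹ = 1 := mul_inv_cancel₀ ha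
    linear_combination (-a) * h3 - (1 + a) * h4
  have ha3 : a ^ 3 = 1 := by
    linear_combination (a - 1) * hpoly
  have hau3 : au ^ 3 = 1 := by
    ext
    push_cast [hau_def]
    exact ha3
  have := orderOf_dvd_of_pow_eq_one hau3
  rw [hord] at this
  have hle : 2 ^ e - 1 ≤ 3 := Nat.le_of_dvd (by norm_num) this
  omega
end
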